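/- arXiv:2503.21452 — 3 statements merged into one kernel-verified Lean document; each statement's English description precedes it below -/
import Mathlib

section
/- (Theorem 1) If det A(λ) ≠ 0, then the loaded Volterra integral equation has exactly one continuous solution x : [t₀,T] → ℝ. -/
open MeasureTheory Matrix
open intervalIntegral Set

open MeasureTheory intervalIntegral Set

lemma volterra_EU (t₀ T : ℝ) (ht : t₀ ≤ T) (K' : ℝ → ℝ → ℝ)
    (hK' : Continuous fun q : ℝ × ℝ => K' q.1 q.2) (lam : ℝ) (g : ℝ → ℝ)
    (hg : Continuous g) :
    ∃! x : C(Set.Icc t₀ T, ℝ), ∀ t ∈ Set.Icc t₀ T,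
      Set.IccExtend ht x t = lam * (∫ s in t₀..t, K' t s * Set.IccExtend ht x s) + g t := by
  -- the Picard map
  have hcont : ∀ x : C(Set.Icc t₀ T, ℝ),
      Continuous fun u : ℝ => lam * (∫ s in t₀..u, K' u s * Set.IccExtend ht x s) + g u := by
    intro x
    have h1 : Continuous fun u : ℝ => ∫ s in t₀..u, K' u s * Set.IccExtend ht x s := by
      apply continuous_parametric_intervalIntegral_of_continuous (f := fun (u : ℝ) s =>
        K' u s * Set.IccExtend ht x s) (μ := volume)
      · exact hK'.mul ((x.continuous.Icc_extend').comp continuous_snd)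
      · exact continuous_id
    exact (continuous_const.mul h1).add hg
  set Φ : C(Set.Icc t₀ T, ℝ) → C(Set.Icc t₀ T, ℝ) := fun x =>
    ⟨fun u => lam * (∫ s in t₀..(u : ℝ), K' u s * Set.IccExtend ht x s) + g u,
      (hcont x).comp continuous_subtype_val⟩ with hΦ
  -- fixed points of Φ are exactly the solutions
  have hfix : ∀ x : C(Set.Icc t₀ T, ℝ), (Function.IsFixedPt Φ x ↔
      ∀ t ∈ Set.Icc t₀ T, Set.IccExtend ht x t
        = lam * (∫ s in t₀..t, K' t s * Set.IccExtend ht x s) + g t) := by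
    intro x
    constructor
    · intro h t htmem
      rw [Set.IccExtend_of_mem ht x htmem]
      conv_lhs => rw [← h]
      rfl
    · intro h
      ext u
      have := h u u.2
      rw [Set.IccExtend_of_mem ht x u.2] at this
      exact this.symm
  -- bound on K'
  obtain ⟨M0, hM0⟩ := (isCompact_Icc.prod isCompact_Icc).exists_bound_of_continuousOn
    (s := Set.Icc t₀ T ×ˢ Set.Icc t₀ T) hK'.continuousOn
  set M : ℝ := max M0 0 with hMdef
  have hM : ∀ u s : ℝ, u ∈ Set.Icc t₀ T → s ∈ Set.Icc t₀ T → |K' u s| ≤ M := by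
    intro u s hu hs
    exact le_trans (hM0 (u, s) ⟨hu, hs⟩) (le_max_left _ _)
  have hMnn : 0 ≤ M := le_max_right _ _
  set C : ℝ := |lam| * M with hCdef
  have hCnn : 0 ≤ C := mul_nonneg (abs_nonneg _) hMnn
  -- key iterate estimate
  have key : ∀ (n : ℕ) (x y : C(Set.Icc t₀ T, ℝ)) (u : Set.Icc t₀ T),
      |Φ^[n] x u - Φ^[n] y u| ≤ C ^ n * ((u : ℝ) - t₀) ^ n / n.factorial * dist x y := by
    intro n
    induction n with
    | zero =>
      intro x y u
      simpa [Real.dist_eq] using ContinuousMap.dist_apply_le_dist u (f := x) (g := y)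
    | succ n ih =>
      intro x y u
      rw [Function.iterate_succ_apply', Function.iterate_succ_apply']
      set z := Φ^[n] x with hz
      set w := Φ^[n] y with hw
      have hint : ∀ v : C(Set.Icc t₀ T, ℝ), IntervalIntegrable
          (fun s => K' u s * Set.IccExtend ht v s) volume t₀ u := by
        intro v
        exact ((hK'.comp (continuous_const.prodMk continuous_id)).mul
          v.continuous.Icc_extend').intervalIntegrable _ _
      have h3 : (∫ s in t₀..(u : ℝ), K' u s * (Set.IccExtend ht z s - Set.IccExtend ht w s))
          = (∫ s in t₀..(u : ℝ), K' u s * Set.IccExtend ht z s)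
            - ∫ s in t₀..(u : ℝ), K' u s * Set.IccExtend ht w s := by
        rw [← intervalIntegral.integral_sub (hint z) (hint w)]
        apply intervalIntegral.integral_congr
        intro s _
        ring
      have heq : (Φ z) u - (Φ w) u
          = lam * ∫ s in t₀..(u : ℝ), K' u s * (Set.IccExtend ht z s - Set.IccExtend ht w s) := by
        show (lam * _ + g u) - (lam * _ + g u) = _
        rw [h3]
        ring
      rw [heq, abs_mul]
      have hu2 : t₀ ≤ (u : ℝ) := u.2.1
      have hle1 : |∫ s in t₀..(u : ℝ), K' u s * (Set.IccExtend ht z s - Set.IccExtend ht w s)|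
          ≤ ∫ s in t₀..(u : ℝ), |K' u s| * |Set.IccExtend ht z s - Set.IccExtend ht w s| := by
        have := intervalIntegral.norm_integral_le_integral_norm (μ := volume)
          (f := fun s => K' u s * (Set.IccExtend ht z s - Set.IccExtend ht w s)) hu2
        simpa [Real.norm_eq_abs, abs_mul] using this
      have hintabs : IntervalIntegrable
          (fun s => |K' u s| * |Set.IccExtend ht z s - Set.IccExtend ht w s|) volume t₀ u := by
        apply Continuous.intervalIntegrable
        exact (hK'.comp (continuous_const.prodMk continuous_id)).abs.mul
          (z.continuous.Icc_extend'.sub w.continuous.Icc_extend').abs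
      have hintbd : IntervalIntegrable
          (fun s : ℝ => M * (C ^ n * (s - t₀) ^ n / n.factorial * dist x y)) volume t₀ u := by
        apply Continuous.intervalIntegrable
        exact continuous_const.mul (((continuous_const.mul
          ((continuous_id.sub continuous_const).pow n)).div_const _).mul continuous_const)
      have hle2 : ∫ s in t₀..(u : ℝ), |K' u s| * |Set.IccExtend ht z s - Set.IccExtend ht w s|
          ≤ ∫ s in t₀..(u : ℝ), M * (C ^ n * (s - t₀) ^ n / n.factorial * dist x y) := by
        apply intervalIntegral.integral_mono_on hu2 hintabs hintbd
        intro s hs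
        have hsI : s ∈ Set.Icc t₀ T := ⟨hs.1, le_trans hs.2 u.2.2⟩
        have h1 : |K' u s| ≤ M := hM _ _ u.2 hsI
        have h2 : |Set.IccExtend ht z s - Set.IccExtend ht w s|
            ≤ C ^ n * (s - t₀) ^ n / n.factorial * dist x y := by
          rw [Set.IccExtend_of_mem ht z hsI, Set.IccExtend_of_mem ht w hsI]
          exact ih x y ⟨s, hsI⟩
        exact mul_le_mul h1 h2 (abs_nonneg _) hMnn
      have hval : ∫ s in t₀..(u : ℝ), M * (C ^ n * (s - t₀) ^ n / n.factorial * dist x y)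
          = M * (C ^ n / n.factorial * dist x y) * (((u : ℝ) - t₀) ^ (n + 1) / (n + 1)) := by
        rw [intervalIntegral.integral_congr (g := fun s : ℝ =>
          M * (C ^ n / n.factorial * dist x y) * (s - t₀) ^ n) (fun s _ => by ring)]
        rw [intervalIntegral.integral_const_mul]
        congr 1
        rw [show (fun s : ℝ => (s - t₀) ^ n) = fun s : ℝ => (fun r : ℝ => r ^ n) (s - t₀) from rfl,
          intervalIntegral.integral_comp_sub_right (fun r : ℝ => r ^ n) t₀]
        simp [integral_pow]
      calc |lam| * |∫ s in t₀..(u : ℝ), K' u s * (Set.IccExtend ht z s - Set.IccExtend ht w s)|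
          ≤ |lam| * (M * (C ^ n / n.factorial * dist x y) * (((u : ℝ) - t₀) ^ (n + 1) / (n + 1))) := by
            apply mul_le_mul_of_nonneg_left _ (abs_nonneg _)
            rw [← hval]
            exact le_trans hle1 hle2
        _ = C ^ (n + 1) * ((u : ℝ) - t₀) ^ (n + 1) / (n + 1).factorial * dist x y := by
            rw [Nat.factorial_succ, hCdef]
            have h1 : ((n.factorial : ℝ)) ≠ 0 := Nat.cast_ne_zero.2 (Nat.factorial_ne_zero _)
            have h2 : ((n : ℝ) + 1) ≠ 0 := by positivity
            push_cast
            field_simp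
            ring
  -- dist estimate for iterates
  have hTnn : 0 ≤ T - t₀ := sub_nonneg.2 ht
  have keydist : ∀ (n : ℕ) (x y : C(Set.Icc t₀ T, ℝ)),
      dist (Φ^[n] x) (Φ^[n] y) ≤ (C * (T - t₀)) ^ n / n.factorial * dist x y := by
    intro n x y
    have hnn : 0 ≤ (C * (T - t₀)) ^ n / n.factorial * dist x y := by positivity
    rw [ContinuousMap.dist_le hnn]
    intro u
    rw [Real.dist_eq]
    refine le_trans (key n x y u) ?_
    have h1 : ((u : ℝ) - t₀) ^ n ≤ (T - t₀) ^ n := by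
      apply pow_le_pow_left₀ (sub_nonneg.2 u.2.1) (by linarith [u.2.2])
    conv_rhs => rw [mul_pow]
    gcongr C ^ n * ?_ / _ * _
  -- pick n making the iterate a contraction
  obtain ⟨n, hn⟩ : ∃ n : ℕ, (C * (T - t₀)) ^ n / n.factorial < 1 := by
    have := FloorSemiring.tendsto_pow_div_factorial_atTop (C * (T - t₀))
    rcases (Metric.tendsto_atTop.1 this 1 one_pos) with ⟨N, hN⟩
    refine ⟨N, ?_⟩
    have := hN N le_rfl
    rw [Real.dist_eq, sub_zero] at this
    exact lt_of_abs_lt this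
  have hκnn : 0 ≤ (C * (T - t₀)) ^ n / n.factorial := by positivity
  set κ : NNReal := ⟨(C * (T - t₀)) ^ n / n.factorial, hκnn⟩ with hκdef
  have hcontr : ContractingWith κ (Φ^[n]) := by
    constructor
    · exact_mod_cast hn
    · apply LipschitzWith.of_dist_le_mul
      intro x y
      exact keydist n x y
  obtain ⟨x₀, hx₀fix, hx₀uniq⟩ : ∃! x : C(Set.Icc t₀ T, ℝ), Function.IsFixedPt Φ x := by
    refine ⟨hcontr.fixedPoint (Φ^[n]), hcontr.isFixedPt_fixedPoint_iterate, ?_⟩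
    intro y hy
    exact hcontr.fixedPoint_unique (Function.IsFixedPt.iterate hy n)
  exact ⟨x₀, (hfix x₀).1 hx₀fix, fun y hy => hx₀uniq y ((hfix y).2 hy)⟩
noncomputable def iterK (K' : ℝ → ℝ → ℝ) : ℕ → ℝ → ℝ → ℝ
  | 0 => K'
  | n + 1 => fun t s => ∫ z in s..t, K' t z * iterK K' n z s

lemma iterK_cont {K' : ℝ → ℝ → ℝ} (hK' : Continuous fun q : ℝ × ℝ => K' q.1 q.2) :
    ∀ n, Continuous fun q : ℝ × ℝ => iterK K' n q.1 q.2 := by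
  intro n
  induction n with
  | zero => exact hK'
  | succ n ih =>
    have hF : Continuous fun p : (ℝ × ℝ) × ℝ => K' p.1.1 p.2 * iterK K' n p.2 p.1.2 := by
      apply Continuous.mul
      · exact hK'.comp ((continuous_fst.comp continuous_fst).prodMk continuous_snd)
      · exact ih.comp (continuous_snd.prodMk (continuous_snd.comp continuous_fst))
    have h1 : Continuous fun q : ℝ × ℝ => ∫ z in (0:ℝ)..q.1, K' q.1 z * iterK K' n z q.2 :=
      continuous_parametric_intervalIntegral_of_continuous (μ := volume)
        (f := fun (q : ℝ × ℝ) z => K' q.1 z * iterK K' n z q.2) hF continuous_fst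
    have h2 : Continuous fun q : ℝ × ℝ => ∫ z in (0:ℝ)..q.2, K' q.1 z * iterK K' n z q.2 :=
      continuous_parametric_intervalIntegral_of_continuous (μ := volume)
        (f := fun (q : ℝ × ℝ) z => K' q.1 z * iterK K' n z q.2) hF continuous_snd
    have heq : (fun q : ℝ × ℝ => iterK K' (n + 1) q.1 q.2)
        = fun q : ℝ × ℝ => (∫ z in (0:ℝ)..q.1, K' q.1 z * iterK K' n z q.2)
          - ∫ z in (0:ℝ)..q.2, K' q.1 z * iterK K' n z q.2 := by
      funext q
      show (∫ z in q.2..q.1, K' q.1 z * iterK K' n z q.2) = _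
      have hi : ∀ c d : ℝ, IntervalIntegrable (fun z => K' q.1 z * iterK K' n z q.2) volume c d := by
        intro c d
        apply Continuous.intervalIntegrable
        exact (hK'.comp (continuous_const.prodMk continuous_id)).mul
          (ih.comp (continuous_id.prodMk continuous_const))
      rw [← intervalIntegral.integral_interval_sub_left (hi 0 q.1) (hi 0 q.2)]
    rw [heq]
    exact h1.sub h2

lemma iterK_bound {t₀ T : ℝ} {K' : ℝ → ℝ → ℝ} (hK' : Continuous fun q : ℝ × ℝ => K' q.1 q.2)
    {M : ℝ} (hMnn : 0 ≤ M)
    (hM : ∀ u s : ℝ, u ∈ Set.Icc t₀ T → s ∈ Set.Icc t₀ T → |K' u s| ≤ M) :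
    ∀ (n : ℕ) (s t : ℝ), t₀ ≤ s → s ≤ t → t ≤ T →
      |iterK K' n t s| ≤ M ^ (n + 1) * (t - s) ^ n / n.factorial := by
  intro n
  induction n with
  | zero =>
    intro s t h1 h2 h3
    simpa [iterK] using hM t s ⟨le_trans h1 h2, h3⟩ ⟨h1, le_trans h2 h3⟩
  | succ n ih =>
    intro s t h1 h2 h3
    have hre : iterK K' (n + 1) t s = ∫ z in s..t, K' t z * iterK K' n z s := rfl
    have habs : |iterK K' (n + 1) t s| ≤ ∫ z in s..t, |K' t z| * |iterK K' n z s| := by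
      rw [hre]
      simpa [Real.norm_eq_abs, abs_mul] using intervalIntegral.norm_integral_le_integral_norm
        (μ := volume) (f := fun z => K' t z * iterK K' n z s) h2
    have hintabs : IntervalIntegrable (fun z => |K' t z| * |iterK K' n z s|) volume s t := by
      apply Continuous.intervalIntegrable
      exact ((hK'.comp (continuous_const.prodMk continuous_id)).abs).mul
        (((iterK_cont hK' n).comp (continuous_id.prodMk continuous_const)).abs)
    have hintbd : IntervalIntegrable
        (fun z : ℝ => M * (M ^ (n + 1) * (z - s) ^ n / n.factorial)) volume s t := by
      apply Continuous.intervalIntegrable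
      exact continuous_const.mul ((continuous_const.mul
        ((continuous_id.sub continuous_const).pow n)).div_const _)
    have hle : ∫ z in s..t, |K' t z| * |iterK K' n z s|
        ≤ ∫ z in s..t, M * (M ^ (n + 1) * (z - s) ^ n / n.factorial) := by
      apply intervalIntegral.integral_mono_on h2 hintabs hintbd
      intro z hz
      have hz1 : t₀ ≤ z := le_trans h1 hz.1
      have hz2 : z ≤ T := le_trans hz.2 h3
      apply mul_le_mul (hM t z ⟨le_trans h1 h2, h3⟩ ⟨hz1, hz2⟩)
        (ih s z h1 hz.1 hz2) (abs_nonneg _) hMnn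
    have hval : ∫ z in s..t, M * (M ^ (n + 1) * (z - s) ^ n / n.factorial)
        = M * (M ^ (n + 1) / n.factorial) * ((t - s) ^ (n + 1) / (n + 1)) := by
      rw [intervalIntegral.integral_congr (g := fun z : ℝ =>
        M * (M ^ (n + 1) / n.factorial) * (z - s) ^ n) (fun z _ => by ring)]
      rw [intervalIntegral.integral_const_mul]
      congr 1
      rw [show (fun z : ℝ => (z - s) ^ n) = fun z : ℝ => (fun r : ℝ => r ^ n) (z - s) from rfl,
        intervalIntegral.integral_comp_sub_right (fun r : ℝ => r ^ n) s]
      simp [integral_pow]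
    refine le_trans (le_trans habs hle) (le_of_eq ?_)
    rw [hval, Nat.factorial_succ]
    have hh1 : ((n.factorial : ℝ)) ≠ 0 := Nat.cast_ne_zero.2 (Nat.factorial_ne_zero _)
    have hh2 : ((n : ℝ) + 1) ≠ 0 := by positivity
    push_cast
    field_simp
    ring
-- agreement of iterK with the given Kn on the triangle
lemma iterK_eq_Kn {t₀ T : ℝ} {K K' : ℝ → ℝ → ℝ}
    (hKtri : ∀ t s : ℝ, t₀ ≤ s → s ≤ t → t ≤ T → K' t s = K t s)
    {Kn : ℕ → ℝ → ℝ → ℝ} (hKn1 : ∀ t s, Kn 1 t s = K t s)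
    (hKnrec : ∀ n, 2 ≤ n → ∀ t s, Kn n t s = ∫ z in s..t, K t z * Kn (n - 1) z s) :
    ∀ (n : ℕ) (t s : ℝ), t₀ ≤ s → s ≤ t → t ≤ T → Kn (n + 1) t s = iterK K' n t s := by
  intro n
  induction n with
  | zero =>
    intro t s h1 h2 h3
    rw [hKn1, show iterK K' 0 t s = K' t s from rfl, hKtri t s h1 h2 h3]
  | succ n ih =>
    intro t s h1 h2 h3
    rw [hKnrec (n + 2) (by omega) t s, show n + 2 - 1 = n + 1 from rfl]
    show (∫ z in s..t, K t z * Kn (n + 1) z s) = ∫ z in s..t, K' t z * iterK K' n z s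
    apply intervalIntegral.integral_congr
    intro z hz
    beta_reduce
    rw [Set.uIcc_of_le h2] at hz
    have hz1 : t₀ ≤ z := le_trans h1 hz.1
    have hz2 : z ≤ T := le_trans hz.2 h3
    rw [ih z s h1 hz.1 hz2, hKtri t z hz1 hz.2 h3]

-- Fubini on the triangle
lemma triangle_swap {t₀ t : ℝ} (h : t₀ ≤ t) {H : ℝ → ℝ → ℝ}
    (hH : Continuous fun q : ℝ × ℝ => H q.1 q.2) :
    (∫ s in t₀..t, ∫ z in t₀..s, H s z) = ∫ z in t₀..t, ∫ s in z..t, H s z := by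
  set I := Set.Ioc t₀ t with hIdef
  set G : ℝ → ℝ → ℝ := fun s z => Set.indicator (Set.Iic s) (fun z => H s z) z with hGdef
  have hGunc : Function.uncurry G
      = Set.indicator {q : ℝ × ℝ | q.2 ≤ q.1} (Function.uncurry H) := by
    funext q
    by_cases hq : q.2 ≤ q.1
    · simp [Function.uncurry, hGdef, Set.indicator, hq]
    · simp [Function.uncurry, hGdef, Set.indicator, hq]
  have hHint : Integrable (Function.uncurry H) ((volume.restrict I).prod (volume.restrict I)) := by
    rw [MeasureTheory.Measure.prod_restrict, ← MeasureTheory.Measure.volume_eq_prod]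
    have h1 : IntegrableOn (Function.uncurry H) (Set.Icc t₀ t ×ˢ Set.Icc t₀ t) volume :=
      hH.continuousOn.integrableOn_compact (isCompact_Icc.prod isCompact_Icc)
    exact h1.mono_set (Set.prod_mono Set.Ioc_subset_Icc_self Set.Ioc_subset_Icc_self)
  have hGint : Integrable (Function.uncurry G) ((volume.restrict I).prod (volume.restrict I)) := by
    rw [hGunc]
    exact hHint.indicator (measurableSet_le measurable_snd measurable_fst)
  have hswap : (∫ s, ∫ z, G s z ∂(volume.restrict I) ∂(volume.restrict I))
      = ∫ z, ∫ s, G s z ∂(volume.restrict I) ∂(volume.restrict I) :=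
    MeasureTheory.integral_integral_swap hGint
  have hleft : ∀ s ∈ I, (∫ z, G s z ∂(volume.restrict I)) = ∫ z in t₀..s, H s z := by
    intro s hs
    rw [hGdef]
    rw [MeasureTheory.integral_indicator measurableSet_Iic]
    rw [MeasureTheory.Measure.restrict_restrict measurableSet_Iic]
    have : Set.Iic s ∩ I = Set.Ioc t₀ s := by
      ext z
      simp only [Set.mem_inter_iff, Set.mem_Iic, hIdef, Set.mem_Ioc]
      constructor
      · rintro ⟨hz1, hz2, hz3⟩; exact ⟨hz2, hz1⟩
      · rintro ⟨hz1, hz2⟩; exact ⟨hz2, hz1, le_trans hz2 hs.2⟩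
    rw [this, intervalIntegral.integral_of_le hs.1.le]
  have hright : ∀ z ∈ I, (∫ s, G s z ∂(volume.restrict I)) = ∫ s in z..t, H s z := by
    intro z hz
    have hGz : ∀ s : ℝ, G s z = Set.indicator (Set.Ici z) (fun s => H s z) s := by
      intro s
      by_cases hzs : z ≤ s
      · simp [hGdef, Set.indicator, hzs]
      · simp [hGdef, Set.indicator, hzs]
    simp_rw [hGz]
    rw [MeasureTheory.integral_indicator measurableSet_Ici]
    rw [MeasureTheory.Measure.restrict_restrict measurableSet_Ici]
    have hae : (Set.Ici z ∩ I : Set ℝ) =ᵐ[volume] (Set.Ioc z t : Set ℝ) := by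
      have hsub1 : (Set.Ici z ∩ I) \ Set.Ioc z t ⊆ {z} := by
        rintro w ⟨⟨hw1, hw2, hw3⟩, hw4⟩
        simp only [Set.mem_Ioc, not_and, not_le] at hw4
        simp only [Set.mem_singleton_iff]
        rcases lt_or_eq_of_le (Set.mem_Ici.mp hw1) with hlt | heq
        · exact absurd hw3 (not_le.2 (hw4 hlt))
        · exact heq.symm
      have hsub2 : Set.Ioc z t \ (Set.Ici z ∩ I) ⊆ (∅ : Set ℝ) := by
        rintro w ⟨⟨hw1, hw2⟩, hw3⟩
        exfalso
        exact hw3 ⟨le_of_lt hw1, lt_trans hz.1 hw1, hw2⟩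
      rw [MeasureTheory.ae_eq_set]
      constructor
      · exact MeasureTheory.measure_mono_null hsub1 (MeasureTheory.measure_singleton z)
      · exact MeasureTheory.measure_mono_null hsub2 MeasureTheory.measure_empty
    rw [MeasureTheory.setIntegral_congr_set hae, intervalIntegral.integral_of_le hz.2]
  calc (∫ s in t₀..t, ∫ z in t₀..s, H s z)
      = ∫ s in I, ∫ z in t₀..s, H s z := intervalIntegral.integral_of_le h
    _ = ∫ s in I, ∫ z, G s z ∂(volume.restrict I) :=
        MeasureTheory.setIntegral_congr_fun measurableSet_Ioc (fun s hs => (hleft s hs).symm)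
    _ = ∫ z in I, ∫ s, G s z ∂(volume.restrict I) := hswap
    _ = ∫ z in I, ∫ s in z..t, H s z :=
        MeasureTheory.setIntegral_congr_fun measurableSet_Ioc (fun z hz => hright z hz)
    _ = ∫ z in t₀..t, ∫ s in z..t, H s z := (intervalIntegral.integral_of_le h).symm

-- interchanging tsum and interval integral with uniform bounds
lemma integral_tsum_swap_Ioc {t₀ t : ℝ} (h : t₀ ≤ t) {F : ℕ → ℝ → ℝ}
    (hFc : ∀ n, ContinuousOn (F n) (Set.Icc t₀ t)) {u : ℕ → ℝ} (hu : Summable u)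
    (hbd : ∀ n s, s ∈ Set.Icc t₀ t → |F n s| ≤ u n) :
    (∫ s in t₀..t, ∑' n, F n s) = ∑' n, ∫ s in t₀..t, F n s := by
  have hint : ∀ n, IntegrableOn (F n) (Set.Ioc t₀ t) volume := by
    intro n
    exact ((hFc n).integrableOn_compact isCompact_Icc).mono_set Set.Ioc_subset_Icc_self
  have hsum : Summable fun n => ∫ s in Set.Ioc t₀ t, ‖F n s‖ := by
    apply Summable.of_nonneg_of_le (fun n => MeasureTheory.integral_nonneg (fun s => norm_nonneg _))
      (fun n => ?_) (hu.mul_left (t - t₀))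
    calc (∫ s in Set.Ioc t₀ t, ‖F n s‖)
        ≤ ∫ _ in Set.Ioc t₀ t, u n := by
          apply MeasureTheory.setIntegral_mono_on (hint n).norm
            (MeasureTheory.integrableOn_const measure_Ioc_lt_top.ne) measurableSet_Ioc
          intro s hs
          exact hbd n s ⟨le_of_lt hs.1, hs.2⟩
      _ = (t - t₀) * u n := by
          rw [MeasureTheory.setIntegral_const]
          rw [MeasureTheory.measureReal_def, Real.volume_Ioc, smul_eq_mul, ENNReal.toReal_ofReal (by linarith)]
  rw [intervalIntegral.integral_of_le h]
  rw [← MeasureTheory.integral_tsum_of_summable_integral_norm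
    (fun n => hint n) hsum]
  congr 1
  funext n
  exact (intervalIntegral.integral_of_le h).symm
lemma iterK_succ (K' : ℝ → ℝ → ℝ) (n : ℕ) (t s : ℝ) :
    iterK K' (n + 1) t s = ∫ z in s..t, K' t z * iterK K' n z s := rfl

lemma resolvent_solves {t₀ T : ℝ} (ht : t₀ ≤ T) {K' : ℝ → ℝ → ℝ}
    (hK' : Continuous fun q : ℝ × ℝ => K' q.1 q.2) (lam : ℝ)
    {Rr : ℝ → ℝ → ℝ}
    (hRr : ∀ t s : ℝ, t₀ ≤ s → s ≤ t → t ≤ T →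
      Rr t s = ∑' n : ℕ, lam ^ (n + 1) * iterK K' n t s)
    {α : ℝ → ℝ} (hα : Continuous α) :
    ContinuousOn (fun t => ∫ s in t₀..t, Rr t s * α s) (Set.Icc t₀ T) ∧
    ∀ t ∈ Set.Icc t₀ T, (∫ s in t₀..t, Rr t s * α s)
      = lam * ∫ s in t₀..t, K' t s * (α s + ∫ z in t₀..s, Rr s z * α z) := by
  have hTt : (0:ℝ) ≤ T - t₀ := by linarith
  -- bounds
  obtain ⟨M0, hM0⟩ := (isCompact_Icc.prod isCompact_Icc).exists_bound_of_continuousOn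
    (s := Set.Icc t₀ T ×ˢ Set.Icc t₀ T) hK'.continuousOn
  set M : ℝ := max M0 0 with hMdef
  have hM : ∀ u s : ℝ, u ∈ Set.Icc t₀ T → s ∈ Set.Icc t₀ T → |K' u s| ≤ M :=
    fun u s hu hs => le_trans (hM0 (u, s) ⟨hu, hs⟩) (le_max_left _ _)
  have hMnn : 0 ≤ M := le_max_right _ _
  obtain ⟨Ma0, hMa0⟩ := isCompact_Icc.exists_bound_of_continuousOn
    (s := Set.Icc t₀ T) hα.continuousOn
  set Ma : ℝ := max Ma0 0 with hMadef
  have hMa : ∀ s : ℝ, s ∈ Set.Icc t₀ T → |α s| ≤ Ma :=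
    fun s hs => le_trans (hMa0 s hs) (le_max_left _ _)
  have hMann : 0 ≤ Ma := le_max_right _ _
  set q : ℝ := |lam| * M * (T - t₀) with hqdef
  have h0 : Summable (fun n : ℕ => q ^ n / n.factorial) := Real.summable_pow_div_factorial q
  -- pointwise product bound on triangle
  have hstep : ∀ (n : ℕ) (s t : ℝ), t₀ ≤ s → s ≤ t → t ≤ T →
      |iterK K' n t s * α s| ≤ M ^ (n + 1) * (T - t₀) ^ n / n.factorial * Ma := by
    intro n s t h1 h2 h3
    rw [abs_mul]
    have h4 : (0:ℝ) ≤ t - s := by linarith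
    have h5 : t - s ≤ T - t₀ := by linarith
    have hb1 : |iterK K' n t s| ≤ M ^ (n + 1) * (T - t₀) ^ n / n.factorial := by
      refine le_trans (iterK_bound hK' hMnn hM n s t h1 h2 h3) ?_
      gcongr
    have hb2 : |α s| ≤ Ma := hMa s ⟨h1, le_trans h2 h3⟩
    exact mul_le_mul hb1 hb2 (abs_nonneg _) (by positivity)
  set w : ℕ → ℝ := fun n => |lam| ^ (n + 1) * (M ^ (n + 1) * (T - t₀) ^ n / n.factorial * Ma)
    with hwdef
  have hwnn : ∀ n, 0 ≤ w n := by
    intro n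
    apply mul_nonneg (by positivity)
    apply mul_nonneg _ hMann
    apply div_nonneg (mul_nonneg (by positivity) (by positivity)) (by positivity)
  have hw : Summable w := by
    apply Summable.congr (h0.mul_left (|lam| * M * Ma))
    intro n
    simp only [hwdef, hqdef, mul_pow]
    ring
  set u : ℕ → ℝ := fun n => w n * (T - t₀) with hudef
  have hu : Summable u := hw.mul_right _
  -- the terms of the Neumann series
  set v : ℕ → ℝ → ℝ := fun n t => lam ^ (n + 1) * ∫ s in t₀..t, iterK K' n t s * α s with hvdef
  have hvcont : ∀ n, Continuous (v n) := by
    intro n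
    apply continuous_const.mul
    apply continuous_parametric_intervalIntegral_of_continuous (μ := volume)
      (f := fun (t : ℝ) s => iterK K' n t s * α s) _ continuous_id
    exact ((iterK_cont hK' n)).mul (hα.comp continuous_snd)
  have hvbd : ∀ (n : ℕ) (t : ℝ), t ∈ Set.Icc t₀ T → |v n t| ≤ u n := by
    intro n t htm
    simp only [hvdef]
    rw [abs_mul, abs_pow]
    have hcnn : 0 ≤ M ^ (n + 1) * (T - t₀) ^ n / n.factorial * Ma := by
      apply mul_nonneg _ hMann
      apply div_nonneg (mul_nonneg (by positivity) (by positivity)) (by positivity)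
    have hb : |∫ s in t₀..t, iterK K' n t s * α s|
        ≤ (M ^ (n + 1) * (T - t₀) ^ n / n.factorial * Ma) * (T - t₀) := by
      have hb0 : ‖∫ s in t₀..t, iterK K' n t s * α s‖
          ≤ (M ^ (n + 1) * (T - t₀) ^ n / n.factorial * Ma) * |t - t₀| := by
        apply intervalIntegral.norm_integral_le_of_norm_le_const
        intro x hx
        rw [Set.uIoc_of_le htm.1] at hx
        rw [Real.norm_eq_abs]
        exact hstep n x t (le_of_lt hx.1) hx.2 htm.2
      rw [Real.norm_eq_abs] at hb0
      refine le_trans hb0 ?_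
      rw [abs_of_nonneg (by linarith [htm.1] : (0:ℝ) ≤ t - t₀)]
      exact mul_le_mul_of_nonneg_left (by linarith [htm.2]) hcnn
    calc |lam| ^ (n + 1) * |∫ s in t₀..t, iterK K' n t s * α s|
        ≤ |lam| ^ (n + 1) * ((M ^ (n + 1) * (T - t₀) ^ n / n.factorial * Ma) * (T - t₀)) :=
          mul_le_mul_of_nonneg_left hb (by positivity)
      _ = u n := by simp only [hudef, hwdef]; ring
  set U : ℝ → ℝ := fun t => ∑' n, v n t with hUdef
  have hUc : ContinuousOn U (Set.Icc t₀ T) :=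
    continuousOn_tsum (fun n => (hvcont n).continuousOn) hu
      (fun n x hx => by simpa [Real.norm_eq_abs] using hvbd n x hx)
  have hsumv : ∀ t ∈ Set.Icc t₀ T, Summable (fun n => v n t) := by
    intro t htm
    exact Summable.of_norm_bounded hu (fun n => by simpa [Real.norm_eq_abs] using hvbd n t htm)
  -- claim 2 : the resolvent integral is U
  have claim2 : ∀ t ∈ Set.Icc t₀ T, (∫ s in t₀..t, Rr t s * α s) = U t := by
    intro t htm
    have hcong : ∀ s ∈ Set.uIcc t₀ t, Rr t s * α s
        = ∑' n, lam ^ (n + 1) * iterK K' n t s * α s := by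
      intro s hs
      rw [Set.uIcc_of_le htm.1] at hs
      rw [hRr t s hs.1 hs.2 htm.2]
      exact (tsum_mul_right).symm
    rw [intervalIntegral.integral_congr hcong]
    have hFc : ∀ n, ContinuousOn (fun s => lam ^ (n + 1) * iterK K' n t s * α s)
        (Set.Icc t₀ t) := by
      intro n
      exact ((continuous_const.mul ((iterK_cont hK' n).comp
        (continuous_const.prodMk continuous_id))).mul hα).continuousOn
    have hbd : ∀ (n : ℕ) (s : ℝ), s ∈ Set.Icc t₀ t
        → |lam ^ (n + 1) * iterK K' n t s * α s| ≤ w n := by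
      intro n s hs
      rw [mul_assoc, abs_mul, abs_pow]
      simp only [hwdef]
      exact mul_le_mul_of_nonneg_left (hstep n s t hs.1 hs.2 htm.2) (by positivity)
    rw [integral_tsum_swap_Ioc htm.1 hFc hw hbd]
    apply tsum_congr
    intro n
    simp only [hvdef]
    rw [← intervalIntegral.integral_const_mul]
    apply intervalIntegral.integral_congr
    intro s _
    beta_reduce
    ring
  -- claim 3 : Fubini step
  have claim3 : ∀ (n : ℕ) (t : ℝ), t ∈ Set.Icc t₀ T →
      lam * ∫ s in t₀..t, K' t s * v n s = v (n + 1) t := by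
    intro n t htm
    have hHc : Continuous fun qq : ℝ × ℝ => K' t qq.1 * (iterK K' n qq.1 qq.2 * α qq.2) :=
      (hK'.comp (continuous_const.prodMk continuous_fst)).mul
        ((iterK_cont hK' n).mul (hα.comp continuous_snd))
    have h1 : ∀ s : ℝ, K' t s * v n s
        = lam ^ (n + 1) * ∫ z in t₀..s, K' t s * (iterK K' n s z * α z) := by
      intro s
      simp only [hvdef]
      rw [intervalIntegral.integral_const_mul]
      ring
    calc lam * ∫ s in t₀..t, K' t s * v n s
        = lam * ∫ s in t₀..t, lam ^ (n + 1) * ∫ z in t₀..s, K' t s * (iterK K' n s z * α z) := by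
          rw [intervalIntegral.integral_congr (fun s _ => h1 s)]
      _ = lam ^ (n + 2) * ∫ s in t₀..t, ∫ z in t₀..s, K' t s * (iterK K' n s z * α z) := by
          rw [intervalIntegral.integral_const_mul]
          ring
      _ = lam ^ (n + 2) * ∫ z in t₀..t, ∫ s in z..t, K' t s * (iterK K' n s z * α z) := by
          rw [triangle_swap htm.1 hHc]
      _ = lam ^ (n + 2) * ∫ z in t₀..t, iterK K' (n + 1) t z * α z := by
          congr 1
          apply intervalIntegral.integral_congr
          intro z _
          beta_reduce
          rw [iterK_succ, ← intervalIntegral.integral_mul_const]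
          apply intervalIntegral.integral_congr
          intro s _
          beta_reduce
          ring
      _ = v (n + 1) t := by simp only [hvdef]
  -- claim 4 : integrating U against the kernel
  have claim4 : ∀ t : ℝ, t ∈ Set.Icc t₀ T →
      lam * ∫ s in t₀..t, K' t s * U s = ∑' n, v (n + 1) t := by
    intro t htm
    have hcong : ∀ s ∈ Set.uIcc t₀ t, K' t s * U s = ∑' n, K' t s * v n s := by
      intro s _
      simp only [hUdef]
      exact (tsum_mul_left).symm
    rw [intervalIntegral.integral_congr hcong]
    have hFc : ∀ n, ContinuousOn (fun s => K' t s * v n s) (Set.Icc t₀ t) := by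
      intro n
      exact ((hK'.comp (continuous_const.prodMk continuous_id)).mul (hvcont n)).continuousOn
    have hbd : ∀ (n : ℕ) (s : ℝ), s ∈ Set.Icc t₀ t → |K' t s * v n s| ≤ M * u n := by
      intro n s hs
      rw [abs_mul]
      have hs' : s ∈ Set.Icc t₀ T := ⟨hs.1, le_trans hs.2 htm.2⟩
      exact mul_le_mul (hM t s htm hs') (hvbd n s hs') (abs_nonneg _) hMnn
    rw [integral_tsum_swap_Ioc htm.1 hFc (hu.mul_left M) hbd]
    rw [← tsum_mul_left]
    exact tsum_congr (fun n => claim3 n t htm)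
  -- conclusion
  refine ⟨hUc.congr (fun t htm => claim2 t htm), ?_⟩
  intro t htm
  have hintK : IntervalIntegrable (fun s => K' t s * α s) volume t₀ t :=
    ((hK'.comp (continuous_const.prodMk continuous_id)).mul hα).intervalIntegrable _ _
  have hintU : IntervalIntegrable (fun s => K' t s * U s) volume t₀ t := by
    apply ContinuousOn.intervalIntegrable
    rw [Set.uIcc_of_le htm.1]
    exact ((hK'.comp (continuous_const.prodMk continuous_id)).continuousOn).mul
      (hUc.mono (Set.Icc_subset_Icc_right htm.2))
  have e1 : (∫ s in t₀..t, K' t s * (α s + ∫ z in t₀..s, Rr s z * α z))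
      = ∫ s in t₀..t, K' t s * (α s + U s) := by
    apply intervalIntegral.integral_congr
    intro s hs
    beta_reduce
    rw [Set.uIcc_of_le htm.1] at hs
    rw [claim2 s ⟨hs.1, le_trans hs.2 htm.2⟩]
  have e2 : (∫ s in t₀..t, K' t s * (α s + U s))
      = (∫ s in t₀..t, K' t s * α s) + ∫ s in t₀..t, K' t s * U s := by
    rw [← intervalIntegral.integral_add hintK hintU]
    apply intervalIntegral.integral_congr
    intro s _
    ring
  have hv0 : lam * ∫ s in t₀..t, K' t s * α s = v 0 t := by
    simp only [hvdef, zero_add, pow_one, show iterK K' 0 = K' from rfl]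
  rw [claim2 t htm, e1, e2, mul_add, hv0, claim4 t htm]
  exact Summable.tsum_eq_zero_add (hsumv t htm)
open Matrix in
/-- Theorem 1: if det A(λ) ≠ 0 then the loaded Volterra integral equation has
exactly one continuous solution on [t₀,T]. -/
theorem lvie_unique_solution_of_det_ne_zero
    (t₀ T : ℝ) (ht : t₀ < T) (m : ℕ) (hm : 2 ≤ m)
    (p : Fin (m - 1) → ℝ) (hpmono : StrictMono p)
    (hp : ∀ j, t₀ < p j ∧ p j < T)
    (f : ℝ → ℝ) (hf : ContinuousOn f (Set.Icc t₀ T))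
    (a : Fin (m - 1) → ℝ → ℝ) (ha : ∀ j, ContinuousOn (a j) (Set.Icc t₀ T))
    (K : ℝ → ℝ → ℝ)
    (hK : ContinuousOn (fun q : ℝ × ℝ => K q.1 q.2)
      {q : ℝ × ℝ | t₀ ≤ q.2 ∧ q.2 ≤ q.1 ∧ q.1 ≤ T})
    (lam : ℝ)
    (Kn : ℕ → ℝ → ℝ → ℝ)
    (hKn1 : ∀ t s, Kn 1 t s = K t s)
    (hKnrec : ∀ n, 2 ≤ n → ∀ t s, Kn n t s = ∫ z in s..t, K t z * Kn (n - 1) z s)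
    (R : ℝ → ℝ → ℝ → ℝ)
    (hR : ∀ t s lam', R t s lam' = ∑' n : ℕ, lam' ^ (n + 1) * Kn (n + 1) t s)
    (b : Fin (m - 1) → ℝ → ℝ → ℝ)
    (hb : ∀ j t lam', b j t lam' = a j t + ∫ s in t₀..t, R t s lam' * a j s)
    (A : Matrix (Fin (m - 1)) (Fin (m - 1)) ℝ)
    (hA : ∀ i j, A i j = (if i = j then 1 else 0) + b j (p i) lam)
    (hdet : A.det ≠ 0) :
    ∃! x : C(Set.Icc t₀ T, ℝ),
      ∀ t ∈ Set.Icc t₀ T,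
        Set.IccExtend ht.le x t + ∑ j, a j t * Set.IccExtend ht.le x (p j) =
          lam * (∫ s in t₀..t, K t s * Set.IccExtend ht.le x s) + f t := by
  -- extend K continuously from the closed triangle to the plane
  set Δ : Set (ℝ × ℝ) := {q : ℝ × ℝ | t₀ ≤ q.2 ∧ q.2 ≤ q.1 ∧ q.1 ≤ T} with hΔdef
  have hΔclosed : IsClosed Δ := by
    have hrw : Δ = {q : ℝ × ℝ | t₀ ≤ q.2} ∩ ({q : ℝ × ℝ | q.2 ≤ q.1} ∩ {q : ℝ × ℝ | q.1 ≤ T}) :=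
      rfl
    rw [hrw]
    exact (isClosed_le continuous_const continuous_snd).inter
      ((isClosed_le continuous_snd continuous_fst).inter
        (isClosed_le continuous_fst continuous_const))
  obtain ⟨Kcm, hKcm⟩ := ContinuousMap.exists_restrict_eq hΔclosed
    (⟨Δ.restrict (fun q : ℝ × ℝ => K q.1 q.2), continuousOn_iff_continuous_restrict.1 hK⟩ :
      C(Δ, ℝ))
  set K' : ℝ → ℝ → ℝ := fun t s => Kcm (t, s) with hK'def
  have hK'c : Continuous fun q : ℝ × ℝ => K' q.1 q.2 :=
    Kcm.continuous.comp (continuous_fst.prodMk continuous_snd)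
  have hKtri : ∀ t s : ℝ, t₀ ≤ s → s ≤ t → t ≤ T → K' t s = K t s := by
    intro t s h1 h2 h3
    have hq : ((t, s) : ℝ × ℝ) ∈ Δ := ⟨h1, h2, h3⟩
    have h4 := DFunLike.congr_fun hKcm (⟨(t, s), hq⟩ : Δ)
    exact h4
  -- extensions of f and the a j
  set fext : ℝ → ℝ := Set.IccExtend ht.le ((Set.Icc t₀ T).restrict f) with hfextdef
  have hfextc : Continuous fext :=
    Continuous.Icc_extend' (continuousOn_iff_continuous_restrict.1 hf)
  have hfexteq : ∀ t ∈ Set.Icc t₀ T, fext t = f t := by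
    intro t htm
    rw [hfextdef, Set.IccExtend_of_mem ht.le _ htm]
    rfl
  set aext : Fin (m - 1) → ℝ → ℝ :=
    fun j => Set.IccExtend ht.le ((Set.Icc t₀ T).restrict (a j)) with haextdef
  have haextc : ∀ j, Continuous (aext j) :=
    fun j => Continuous.Icc_extend' (continuousOn_iff_continuous_restrict.1 (ha j))
  have haexteq : ∀ j, ∀ t ∈ Set.Icc t₀ T, aext j t = a j t := by
    intro j t htm
    simp only [haextdef]
    rw [Set.IccExtend_of_mem ht.le _ htm]
    rfl
  -- iterated kernels and the resolvent
  have hKn' : ∀ (n : ℕ) (t s : ℝ), t₀ ≤ s → s ≤ t → t ≤ T → Kn (n + 1) t s = iterK K' n t s :=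
    iterK_eq_Kn hKtri hKn1 hKnrec
  set Rr : ℝ → ℝ → ℝ := fun t s => R t s lam with hRrdef
  have hRr : ∀ t s : ℝ, t₀ ≤ s → s ≤ t → t ≤ T →
      Rr t s = ∑' n : ℕ, lam ^ (n + 1) * iterK K' n t s := by
    intro t s h1 h2 h3
    simp only [hRrdef]
    rw [hR t s lam]
    exact tsum_congr fun n => by rw [hKn' n t s h1 h2 h3]
  set B : Fin (m - 1) → ℝ → ℝ := fun j t => aext j t + ∫ s in t₀..t, Rr t s * aext j s
    with hBdef
  have hres := fun j => resolvent_solves ht.le hK'c lam hRr (haextc j)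
  have hBcont : ∀ j, ContinuousOn (B j) (Set.Icc t₀ T) :=
    fun j => ((haextc j).continuousOn).add (hres j).1
  have hBeq : ∀ j, ∀ t ∈ Set.Icc t₀ T,
      B j t = aext j t + lam * ∫ s in t₀..t, K' t s * B j s := by
    intro j t htm
    simp only [hBdef]
    rw [(hres j).2 t htm]
  have hBb : ∀ j, ∀ t ∈ Set.Icc t₀ T, b j t lam = B j t := by
    intro j t htm
    rw [hb j t lam]
    simp only [hBdef, hRrdef]
    congr 1
    · exact (haexteq j t htm).symm
    · apply intervalIntegral.integral_congr
      intro s hs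
      beta_reduce
      rw [Set.uIcc_of_le htm.1] at hs
      rw [haexteq j s ⟨hs.1, le_trans hs.2 htm.2⟩]
  -- the parametrized Volterra solutions
  have EU : ∀ c : Fin (m - 1) → ℝ, ∃! x : C(Set.Icc t₀ T, ℝ), ∀ t ∈ Set.Icc t₀ T,
      Set.IccExtend ht.le x t =
        lam * (∫ s in t₀..t, K' t s * Set.IccExtend ht.le x s)
          + (fext t - ∑ j, c j * aext j t) := by
    intro c
    apply volterra_EU t₀ T ht.le K' hK'c lam
    exact hfextc.sub (continuous_finset_sum _ fun j _ => continuous_const.mul (haextc j))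
  choose sol hsol hsoluniq using EU
  have hpIcc : ∀ j, p j ∈ Set.Icc t₀ T := fun j => ⟨(hp j).1.le, (hp j).2.le⟩
  set cvec : C(Set.Icc t₀ T, ℝ) → (Fin (m - 1) → ℝ) := fun x j => x ⟨p j, hpIcc j⟩
    with hcvecdef
  -- replacing K by its extension inside the integral
  have hKint : ∀ (x : C(Set.Icc t₀ T, ℝ)) (t : ℝ), t ∈ Set.Icc t₀ T →
      (∫ s in t₀..t, K t s * Set.IccExtend ht.le x s)
        = ∫ s in t₀..t, K' t s * Set.IccExtend ht.le x s := by
    intro x t htm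
    apply intervalIntegral.integral_congr
    intro s hs
    beta_reduce
    rw [Set.uIcc_of_le htm.1] at hs
    rw [hKtri t s hs.1 hs.2 htm.2]
  have hsum : ∀ (x : C(Set.Icc t₀ T, ℝ)) (t : ℝ), t ∈ Set.Icc t₀ T →
      (∑ j, a j t * Set.IccExtend ht.le x (p j)) = ∑ j, cvec x j * aext j t := by
    intro x t htm
    apply Finset.sum_congr rfl
    intro j _
    rw [Set.IccExtend_of_mem ht.le x (hpIcc j), haexteq j t htm]
    simp only [hcvecdef]
    ring
  -- equivalence of the loaded equation with the fixed-point form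
  have hQP : ∀ x : C(Set.Icc t₀ T, ℝ),
      (∀ t ∈ Set.Icc t₀ T, Set.IccExtend ht.le x t + ∑ j, a j t * Set.IccExtend ht.le x (p j)
        = lam * (∫ s in t₀..t, K t s * Set.IccExtend ht.le x s) + f t)
      ↔ ∀ t ∈ Set.Icc t₀ T, Set.IccExtend ht.le x t
          = lam * (∫ s in t₀..t, K' t s * Set.IccExtend ht.le x s)
            + (fext t - ∑ j, cvec x j * aext j t) := by
    intro x
    constructor
    · intro h t htm
      have h1 := h t htm
      rw [hKint x t htm, hsum x t htm, ← hfexteq t htm] at h1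
      linarith [h1]
    · intro h t htm
      have h1 := h t htm
      rw [← hKint x t htm, hfexteq t htm, ← hsum x t htm] at h1
      linarith [h1]
  -- the affine structure of the solutions
  set x0 : C(Set.Icc t₀ T, ℝ) := sol 0 with hx0def
  have hsolc : ∀ (c : Fin (m - 1) → ℝ) (u : Set.Icc t₀ T),
      sol c u = x0 u - ∑ j, c j * B j (u : ℝ) := by
    intro c
    have hwcont : Continuous fun u : Set.Icc t₀ T => x0 u - ∑ j, c j * B j (u : ℝ) := by
      apply x0.continuous.sub
      apply continuous_finset_sum
      intro j _
      exact continuous_const.mul ((hBcont j).restrict)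
    set wc : C(Set.Icc t₀ T, ℝ) := ⟨_, hwcont⟩ with hwcdef
    have hwcval : ∀ s : ℝ, s ∈ Set.Icc t₀ T → Set.IccExtend ht.le wc s
        = Set.IccExtend ht.le x0 s - ∑ j, c j * B j s := by
      intro s hsm
      rw [Set.IccExtend_of_mem ht.le wc hsm, Set.IccExtend_of_mem ht.le x0 hsm]
      rfl
    have hwcP : ∀ t ∈ Set.Icc t₀ T, Set.IccExtend ht.le wc t
        = lam * (∫ s in t₀..t, K' t s * Set.IccExtend ht.le wc s)
          + (fext t - ∑ j, c j * aext j t) := by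
      intro t htm
      have hint0 : IntervalIntegrable (fun s => K' t s * Set.IccExtend ht.le x0 s)
          volume t₀ t :=
        ((hK'c.comp (continuous_const.prodMk continuous_id)).mul
          x0.continuous.Icc_extend').intervalIntegrable _ _
      have hintB : ∀ j, IntervalIntegrable (fun s => K' t s * B j s) volume t₀ t := by
        intro j
        apply ContinuousOn.intervalIntegrable
        rw [Set.uIcc_of_le htm.1]
        exact ((hK'c.comp (continuous_const.prodMk continuous_id)).continuousOn).mul
          ((hBcont j).mono (Set.Icc_subset_Icc_right htm.2))
      have hintsum : IntervalIntegrable (fun s => ∑ j, c j * (K' t s * B j s)) volume t₀ t := by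
        apply ContinuousOn.intervalIntegrable
        rw [Set.uIcc_of_le htm.1]
        apply continuousOn_finset_sum
        intro j _
        exact continuousOn_const.mul
          (((hK'c.comp (continuous_const.prodMk continuous_id)).continuousOn).mul
            ((hBcont j).mono (Set.Icc_subset_Icc_right htm.2)))
      have e0 : (∫ s in t₀..t, K' t s * Set.IccExtend ht.le wc s)
          = ∫ s in t₀..t,
              (K' t s * Set.IccExtend ht.le x0 s - ∑ j, c j * (K' t s * B j s)) := by
        apply intervalIntegral.integral_congr
        intro s hs
        beta_reduce
        rw [Set.uIcc_of_le htm.1] at hs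
        rw [hwcval s ⟨hs.1, le_trans hs.2 htm.2⟩, mul_sub, Finset.mul_sum]
        congr 1
        apply Finset.sum_congr rfl
        intro j _
        ring
      have hsplit : (∫ s in t₀..t, K' t s * Set.IccExtend ht.le wc s)
          = (∫ s in t₀..t, K' t s * Set.IccExtend ht.le x0 s)
            - ∑ j, c j * ∫ s in t₀..t, K' t s * B j s := by
        rw [e0, intervalIntegral.integral_sub hint0 hintsum,
          intervalIntegral.integral_finset_sum
            (fun j _ => (hintB j).const_mul (c j))]
        congr 1
        apply Finset.sum_congr rfl
        intro j _
        rw [intervalIntegral.integral_const_mul]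
      have hP0 := hsol 0 t htm
      have hP0' : Set.IccExtend ht.le x0 t
          = lam * (∫ s in t₀..t, K' t s * Set.IccExtend ht.le x0 s) + fext t := by
        simpa using hP0
      have hcomb : ∑ j, c j * B j t
          = (∑ j, lam * (c j * ∫ s in t₀..t, K' t s * B j s)) + ∑ j, c j * aext j t := by
        rw [← Finset.sum_add_distrib]
        apply Finset.sum_congr rfl
        intro j _
        rw [hBeq j t htm]
        ring
      rw [hwcval t htm, hsplit, hP0', mul_sub, Finset.mul_sum]
      linarith [hcomb]
    have huniq := hsoluniq c wc hwcP
    intro u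
    rw [← huniq]
    rfl
  -- values at the load points and the linear system
  set d : Fin (m - 1) → ℝ := fun i => x0 ⟨p i, hpIcc i⟩ with hddef
  have hBA : ∀ i j, B j (p i) = A i j - (if i = j then (1:ℝ) else 0) := by
    intro i j
    rw [hA i j, ← hBb j (p i) (hpIcc i)]
    ring
  have hfixiff : ∀ c : Fin (m - 1) → ℝ, (cvec (sol c) = c ↔ A.mulVec c = d) := by
    intro c
    have hval : ∀ i, cvec (sol c) i = d i - ((A.mulVec c) i - c i) := by
      intro i
      simp only [hcvecdef]
      rw [hsolc c ⟨p i, hpIcc i⟩]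
      have h2 : (A.mulVec c) i = ∑ j, A i j * c j := by
        simp [Matrix.mulVec, dotProduct]
      have h3 : ∑ j, c j * B j (p i) = ∑ j, (A i j * c j - (if i = j then (1:ℝ) else 0) * c j) := by
        apply Finset.sum_congr rfl
        intro j _
        rw [hBA i j]
        ring
      have h4 : (∑ j, (if i = j then (1:ℝ) else 0) * c j) = c i := by simp
      simp only [hddef]
      rw [h3, Finset.sum_sub_distrib, h4, h2]
    constructor
    · intro hcc
      funext i
      have h5 := congrFun hcc i
      rw [hval i] at h5
      linarith [h5]
    · intro hAc
      funext i
      rw [hval i, congrFun hAc i]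
      ring
  have hdetunit : IsUnit A.det := isUnit_iff_ne_zero.mpr hdet
  set cstar : Fin (m - 1) → ℝ := A⁻¹.mulVec d with hcstardef
  have hc1 : A.mulVec cstar = d := by
    rw [hcstardef, Matrix.mulVec_mulVec, Matrix.mul_nonsing_inv A hdetunit, Matrix.one_mulVec]
  have hc2 : ∀ c, A.mulVec c = d → c = cstar := by
    intro c hc
    rw [hcstardef, ← hc, Matrix.mulVec_mulVec, Matrix.nonsing_inv_mul A hdetunit,
      Matrix.one_mulVec]
  refine ⟨sol cstar, ?_, ?_⟩
  · apply (hQP (sol cstar)).mpr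
    have hcv : cvec (sol cstar) = cstar := (hfixiff cstar).mpr hc1
    rw [hcv]
    exact hsol cstar
  · intro y hy
    have h1 : y = sol (cvec y) := hsoluniq (cvec y) y ((hQP y).mp hy)
    have h2 : cvec (sol (cvec y)) = cvec y := by rw [← h1]
    have h3 : cvec y = cstar := hc2 _ ((hfixiff (cvec y)).mp h2)
    rw [h1, h3]
end

section
/- (Corollary to Theorem 1) If det A(0) ≠ 0, where A(0) is the (m−1)×(m−1) matrix with entries δ_{ij} + a_j(t_i), then there exists ε > 0 such that for every λ ∈ ℝ with |λ| < ε the loaded Volterra integral equation has exactly one continuous solution. -/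
open MeasureTheory Matrix

set_option maxHeartbeats 1000000 in
/-- Corollary to Theorem 1: if det A(0) ≠ 0, where A(0)ᵢⱼ = δᵢⱼ + aⱼ(tᵢ), then for
all sufficiently small |λ| the LVIE has exactly one continuous solution. -/
theorem lvie_unique_solution_for_small_lambda
    (t₀ T : ℝ) (ht : t₀ < T) (m : ℕ) (hm : 2 ≤ m)
    (p : Fin (m - 1) → ℝ) (hpmono : StrictMono p)
    (hp : ∀ j, t₀ < p j ∧ p j < T)
    (f : ℝ → ℝ) (hf : ContinuousOn f (Set.Icc t₀ T))
    (a : Fin (m - 1) → ℝ → ℝ) (ha : ∀ j, ContinuousOn (a j) (Set.Icc t₀ T))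
    (K : ℝ → ℝ → ℝ)
    (hK : ContinuousOn (fun q : ℝ × ℝ => K q.1 q.2)
      {q : ℝ × ℝ | t₀ ≤ q.2 ∧ q.2 ≤ q.1 ∧ q.1 ≤ T})
    (A₀ : Matrix (Fin (m - 1)) (Fin (m - 1)) ℝ)
    (hA₀ : ∀ i j, A₀ i j = (if i = j then 1 else 0) + a j (p i))
    (hdet : A₀.det ≠ 0) :
    ∃ ε > (0 : ℝ), ∀ lam : ℝ, |lam| < ε →
      ∃! x : C(Set.Icc t₀ T, ℝ),
        ∀ t ∈ Set.Icc t₀ T,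
          Set.IccExtend ht.le x t + ∑ j, a j t * Set.IccExtend ht.le x (p j) =
            lam * (∫ s in t₀..t, K t s * Set.IccExtend ht.le x s) + f t := by
  have hle : t₀ ≤ T := ht.le
  -- the load points as elements of the interval
  let pt : Fin (m - 1) → Set.Icc t₀ T := fun j => ⟨p j, (hp j).1.le, (hp j).2.le⟩
  -- the coefficient functions restricted to the interval
  let aC : Fin (m - 1) → C(Set.Icc t₀ T, ℝ) := fun j => ⟨_, (ha j).restrict⟩
  -- clamping map onto [t₀, T]
  let π : ℝ → ℝ := fun u => max t₀ (min u T)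
  have hπc : Continuous π := continuous_const.max (continuous_id.min continuous_const)
  have hπ1 : ∀ u, t₀ ≤ π u := fun u => le_max_left _ _
  have hπ2 : ∀ u, π u ≤ T := fun u => max_le hle (min_le_right _ _)
  have hπeq : ∀ u, t₀ ≤ u → u ≤ T → π u = u := fun u h1 h2 => by
    simp only [π, min_eq_left h2, max_eq_right h1]
  -- continuous extension of the kernel
  let Kc : ℝ → ℝ → ℝ := fun t s => K (π t) (min (π s) (π t))
  have hKcmem : ∀ t s : ℝ,
      ((π t, min (π s) (π t)) : ℝ × ℝ) ∈ {q : ℝ × ℝ | t₀ ≤ q.2 ∧ q.2 ≤ q.1 ∧ q.1 ≤ T} :=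
    fun t s => ⟨le_min (hπ1 s) (hπ1 t), min_le_right _ _, hπ2 t⟩
  have hKcc : Continuous fun q : ℝ × ℝ => Kc q.1 q.2 := by
    have hcont : Continuous fun q : ℝ × ℝ => ((π q.1, min (π q.2) (π q.1)) : ℝ × ℝ) :=
      (hπc.comp continuous_fst).prodMk
        ((hπc.comp continuous_snd).min (hπc.comp continuous_fst))
    exact hK.comp_continuous hcont fun q => hKcmem q.1 q.2
  have hKceq : ∀ t s : ℝ, t₀ ≤ s → s ≤ t → t ≤ T → Kc t s = K t s := by
    intro t s h1 h2 h3
    have hs : π s = s := hπeq s h1 (h2.trans h3)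
    have ht' : π t = t := hπeq t (h1.trans h2) h3
    simp only [Kc, hs, ht', min_eq_left h2]
  -- bound on the kernel
  have hΔcomp : IsCompact {q : ℝ × ℝ | t₀ ≤ q.2 ∧ q.2 ≤ q.1 ∧ q.1 ≤ T} := by
    refine IsCompact.of_isClosed_subset
      (isCompact_Icc.prod isCompact_Icc : IsCompact (Set.Icc t₀ T ×ˢ Set.Icc t₀ T)) ?_ ?_
    · rw [show {q : ℝ × ℝ | t₀ ≤ q.2 ∧ q.2 ≤ q.1 ∧ q.1 ≤ T} =
        {q : ℝ × ℝ | t₀ ≤ q.2} ∩ ({q : ℝ × ℝ | q.2 ≤ q.1} ∩ {q : ℝ × ℝ | q.1 ≤ T}) from rfl]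
      exact (isClosed_le continuous_const continuous_snd).inter
        ((isClosed_le continuous_snd continuous_fst).inter
          (isClosed_le continuous_fst continuous_const))
    · rintro ⟨u, v⟩ ⟨h1, h2, h3⟩
      exact ⟨⟨h1.trans h2, h3⟩, ⟨h1, h2.trans h3⟩⟩
  obtain ⟨M, hM⟩ := hΔcomp.exists_bound_of_continuousOn hK
  set M' : ℝ := max M 0 with hM'def
  have hM'0 : (0 : ℝ) ≤ M' := le_max_right _ _
  have hKcb : ∀ t s : ℝ, |Kc t s| ≤ M' := by
    intro t s
    have := hM _ (hKcmem t s)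
    rw [Real.norm_eq_abs] at this
    exact this.trans (le_max_left _ _)
  -- bound on extended functions
  have hxb : ∀ (x : C(Set.Icc t₀ T, ℝ)) (s : ℝ), |Set.IccExtend hle (⇑x) s| ≤ ‖x‖ := by
    intro x s
    rw [Set.IccExtend_apply]
    exact (x.norm_coe_le_norm (Set.projIcc t₀ T hle s))
  -- integrand continuity for fixed x and t
  have hint : ∀ (x : C(Set.Icc t₀ T, ℝ)) (t : ℝ),
      Continuous fun s => Kc t s * Set.IccExtend hle (⇑x) s := by
    intro x t
    exact (hKcc.comp (continuous_const.prodMk continuous_id)).mul x.continuous.Icc_extend'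
  -- the Volterra operator, first as a plain function
  let Vf : C(Set.Icc t₀ T, ℝ) → C(Set.Icc t₀ T, ℝ) := fun x =>
    ⟨fun τ => ∫ s in t₀..(τ : ℝ), Kc (↑τ) s * Set.IccExtend hle (⇑x) s, by
      apply intervalIntegral.continuous_parametric_intervalIntegral_of_continuous (μ := volume)
        (f := fun (τ : Set.Icc t₀ T) s => Kc (↑τ) s * Set.IccExtend hle (⇑x) s)
      · exact (hKcc.comp (continuous_subtype_val.prodMap continuous_id)).mul
          (x.continuous.Icc_extend'.comp continuous_snd)
      · exact continuous_subtype_val⟩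
  have hVfapp : ∀ (x : C(Set.Icc t₀ T, ℝ)) (τ : Set.Icc t₀ T),
      Vf x τ = ∫ s in t₀..(τ : ℝ), Kc (↑τ) s * Set.IccExtend hle (⇑x) s := fun x τ => rfl
  have hExt_add : ∀ (x y : C(Set.Icc t₀ T, ℝ)) (s : ℝ),
      Set.IccExtend hle (⇑(x + y)) s = Set.IccExtend hle (⇑x) s + Set.IccExtend hle (⇑y) s := by
    intro x y s; simp [Set.IccExtend_apply]
  have hExt_smul : ∀ (c : ℝ) (x : C(Set.Icc t₀ T, ℝ)) (s : ℝ),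
      Set.IccExtend hle (⇑(c • x)) s = c * Set.IccExtend hle (⇑x) s := by
    intro c x s; simp [Set.IccExtend_apply]
  -- linearity
  let Vl : C(Set.Icc t₀ T, ℝ) →ₗ[ℝ] C(Set.Icc t₀ T, ℝ) :=
    { toFun := Vf
      map_add' := by
        intro x y
        ext τ
        rw [ContinuousMap.add_apply, hVfapp, hVfapp, hVfapp,
          ← intervalIntegral.integral_add ((hint x ↑τ).intervalIntegrable t₀ ↑τ)
            ((hint y ↑τ).intervalIntegrable t₀ ↑τ)]
        congr 1
        funext s
        rw [hExt_add]; ring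
      map_smul' := by
        intro c x
        ext τ
        rw [RingHom.id_apply, ContinuousMap.smul_apply, smul_eq_mul, hVfapp, hVfapp]
        rw [show (fun s => Kc (↑τ) s * Set.IccExtend hle (⇑(c • x)) s)
            = fun s => c * (Kc (↑τ) s * Set.IccExtend hle (⇑x) s) from
          funext fun s => by rw [hExt_smul]; ring]
        rw [intervalIntegral.integral_const_mul] }
  -- boundedness
  have hVb : ∀ x : C(Set.Icc t₀ T, ℝ), ‖Vl x‖ ≤ (M' * (T - t₀)) * ‖x‖ := by
    intro x
    rw [ContinuousMap.norm_le _
      (mul_nonneg (mul_nonneg hM'0 (by linarith)) (norm_nonneg x))]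
    intro τ
    have hb : ∀ s ∈ Set.uIoc t₀ (τ : ℝ),
        ‖Kc (↑τ) s * Set.IccExtend hle (⇑x) s‖ ≤ M' * ‖x‖ := by
      intro s _
      rw [Real.norm_eq_abs, abs_mul]
      exact mul_le_mul (hKcb _ _) (hxb x s) (abs_nonneg _) hM'0
    calc ‖Vl x τ‖ = ‖∫ s in t₀..(τ : ℝ), Kc (↑τ) s * Set.IccExtend hle (⇑x) s‖ := rfl
      _ ≤ (M' * ‖x‖) * |(τ : ℝ) - t₀| :=
          intervalIntegral.norm_integral_le_of_norm_le_const hb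
      _ ≤ (M' * ‖x‖) * (T - t₀) := by
          apply mul_le_mul_of_nonneg_left _ (mul_nonneg hM'0 (norm_nonneg x))
          rw [abs_of_nonneg (by linarith [τ.2.1])]
          linarith [τ.2.2]
      _ = (M' * (T - t₀)) * ‖x‖ := by ring
  let V : C(Set.Icc t₀ T, ℝ) →L[ℝ] C(Set.Icc t₀ T, ℝ) :=
    Vl.mkContinuous (M' * (T - t₀)) hVb
  have hVapp : ∀ (x : C(Set.Icc t₀ T, ℝ)) (τ : Set.Icc t₀ T),
      V x τ = ∫ s in t₀..(τ : ℝ), Kc (↑τ) s * Set.IccExtend hle (⇑x) s := fun x τ => rfl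
  -- the loaded operator at λ = 0
  let L₀ : C(Set.Icc t₀ T, ℝ) →L[ℝ] C(Set.Icc t₀ T, ℝ) :=
    ContinuousLinearMap.id ℝ _ + ∑ j, (ContinuousMap.evalCLM ℝ (pt j)).smulRight (aC j)
  have hL₀ : ∀ (x : C(Set.Icc t₀ T, ℝ)) (τ : Set.Icc t₀ T),
      L₀ x τ = x τ + ∑ j, x (pt j) * a j ↑τ := by
    intro x τ
    simp only [L₀, ContinuousLinearMap.add_apply, ContinuousLinearMap.coe_sum',
      Finset.sum_apply, ContinuousLinearMap.id_apply, ContinuousMap.add_apply,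
      ContinuousMap.sum_apply, ContinuousLinearMap.smulRight_apply,
      ContinuousMap.smul_apply, smul_eq_mul]
    rfl
  -- candidate inverse of L₀
  let w : Fin (m - 1) → (C(Set.Icc t₀ T, ℝ) →L[ℝ] ℝ) :=
    fun j => ∑ i, A₀⁻¹ j i • ContinuousMap.evalCLM ℝ (pt i)
  let Rv : C(Set.Icc t₀ T, ℝ) →L[ℝ] C(Set.Icc t₀ T, ℝ) :=
    ContinuousLinearMap.id ℝ _ - ∑ j, (w j).smulRight (aC j)
  have hRv : ∀ (y : C(Set.Icc t₀ T, ℝ)) (τ : Set.Icc t₀ T),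
      Rv y τ = y τ - ∑ j, (∑ i, A₀⁻¹ j i * y (pt i)) * a j ↑τ := by
    intro y τ
    simp only [Rv, w, ContinuousLinearMap.sub_apply, ContinuousLinearMap.coe_sum',
      Finset.sum_apply, ContinuousLinearMap.id_apply, ContinuousMap.sub_apply,
      ContinuousMap.sum_apply, ContinuousLinearMap.smulRight_apply,
      ContinuousMap.smul_apply, smul_eq_mul, ContinuousLinearMap.smul_apply]
    rfl
  -- matrix facts
  have hunit : IsUnit A₀.det := isUnit_iff_ne_zero.mpr hdet
  have hmul : A₀ * A₀⁻¹ = 1 := A₀.mul_nonsing_inv hunit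
  have hmul' : A₀⁻¹ * A₀ = 1 := A₀.nonsing_inv_mul hunit
  have hAv : ∀ (v : Fin (m - 1) → ℝ) i, ∑ j, A₀ i j * (A₀⁻¹ *ᵥ v) j = v i := by
    intro v i
    have h1 : A₀ *ᵥ (A₀⁻¹ *ᵥ v) = v := by
      rw [Matrix.mulVec_mulVec, hmul, Matrix.one_mulVec]
    calc ∑ j, A₀ i j * (A₀⁻¹ *ᵥ v) j = (A₀ *ᵥ (A₀⁻¹ *ᵥ v)) i := by
          simp [Matrix.mulVec, dotProduct]
      _ = v i := by rw [h1]
  have hsum_delta : ∀ (c : Fin (m - 1) → ℝ) i,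
      ∑ j, A₀ i j * c j = c i + ∑ j, a j (p i) * c j := by
    intro c i
    simp only [hA₀, add_mul, Finset.sum_add_distrib]
    congr 1
    simp [ite_mul]
  -- L₀ ∘ Rv = id
  have hLR : L₀.comp Rv = ContinuousLinearMap.id ℝ _ := by
    apply ContinuousLinearMap.ext
    intro y
    apply ContinuousMap.ext
    intro τ
    set c : Fin (m - 1) → ℝ := fun j => ∑ i, A₀⁻¹ j i * y (pt i) with hc
    have hcv : c = A₀⁻¹ *ᵥ (fun i => y (pt i)) := by
      funext j; simp [hc, Matrix.mulVec, dotProduct]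
    have hRy : ∀ σ : Set.Icc t₀ T, Rv y σ = y σ - ∑ j, c j * a j ↑σ := fun σ => hRv y σ
    have hfix : ∀ i, Rv y (pt i) = c i := by
      intro i
      have h1 : ∑ j, A₀ i j * c j = y (pt i) := by
        rw [hcv]; exact hAv _ i
      have h2 : ∑ j, A₀ i j * c j = c i + ∑ j, a j (p i) * c j := hsum_delta c i
      have h3 : ∑ j, c j * a j (p i) = ∑ j, a j (p i) * c j :=
        Finset.sum_congr rfl fun j _ => mul_comm _ _
      have h4 : Rv y (pt i) = y (pt i) - ∑ j, c j * a j (p i) := hRy (pt i)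
      rw [h4, h3]
      linarith [h1, h2]
    rw [ContinuousLinearMap.comp_apply, hL₀, hRy, ContinuousLinearMap.id_apply]
    rw [show ∑ j, Rv y (pt j) * a j ↑τ = ∑ j, c j * a j ↑τ from
      Finset.sum_congr rfl fun j _ => by rw [hfix]]
    ring
  -- injectivity of L₀
  have hinj : Function.Injective L₀ := by
    intro x y hxy
    have h0 : L₀ (x - y) = 0 := by rw [map_sub, hxy, sub_self]
    set z : C(Set.Icc t₀ T, ℝ) := x - y with hz
    have hzτ : ∀ τ : Set.Icc t₀ T, z τ + ∑ j, z (pt j) * a j ↑τ = 0 := by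
      intro τ
      have h1 : (L₀ z) τ = 0 := by rw [h0]; rfl
      rwa [hL₀] at h1
    have hc0 : ∀ i, z (pt i) = 0 := by
      have hAc : A₀ *ᵥ (fun i => z (pt i)) = 0 := by
        funext i
        have h1 := hzτ (pt i)
        have h2 : (A₀ *ᵥ fun i => z (pt i)) i
            = z (pt i) + ∑ j, a j (p i) * z (pt j) := by
          simpa [Matrix.mulVec, dotProduct] using hsum_delta (fun i => z (pt i)) i
        have h3 : ∑ j, z (pt j) * a j (p i) = ∑ j, a j (p i) * z (pt j) :=
          Finset.sum_congr rfl fun j _ => mul_comm _ _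
        rw [h2, Pi.zero_apply]
        rw [h3] at h1
        linarith [h1]
      have h4 : (fun i => z (pt i)) = 0 := by
        have h5 := congrArg (fun v => A₀⁻¹ *ᵥ v) hAc
        simpa [Matrix.mulVec_mulVec, hmul', Matrix.one_mulVec, Matrix.mulVec_zero] using h5
      intro i; exact congrFun h4 i
    have hz0 : z = 0 := by
      apply ContinuousMap.ext
      intro τ
      have := hzτ τ
      simp only [hc0, zero_mul, Finset.sum_const_zero, add_zero] at this
      simpa using this
    have := sub_eq_zero.mp (hz ▸ hz0)
    exact this
  -- Rv ∘ L₀ = id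
  have hRL : Rv.comp L₀ = ContinuousLinearMap.id ℝ _ := by
    apply ContinuousLinearMap.ext
    intro x
    apply hinj
    have h1 := DFunLike.congr_fun hLR (L₀ x)
    simpa using h1
  -- L₀ is a unit
  let u : (C(Set.Icc t₀ T, ℝ) →L[ℝ] C(Set.Icc t₀ T, ℝ))ˣ :=
    ⟨L₀, Rv, by rw [ContinuousLinearMap.mul_def, hLR]; rfl,
      by rw [ContinuousLinearMap.mul_def, hRL]; rfl⟩
  haveI hnt : Nontrivial (C(Set.Icc t₀ T, ℝ) →L[ℝ] C(Set.Icc t₀ T, ℝ)) := by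
    refine ⟨1, 0, fun h => ?_⟩
    have h1 : (1 : C(Set.Icc t₀ T, ℝ) →L[ℝ] C(Set.Icc t₀ T, ℝ)) (1 : C(Set.Icc t₀ T, ℝ))
        = (0 : C(Set.Icc t₀ T, ℝ) →L[ℝ] C(Set.Icc t₀ T, ℝ)) (1 : C(Set.Icc t₀ T, ℝ)) := by rw [h]
    have h2 : (1 : C(Set.Icc t₀ T, ℝ)) = 0 := by
      rwa [ContinuousLinearMap.one_apply, ContinuousLinearMap.zero_apply] at h1
    have h3 := DFunLike.congr_fun h2 (⟨t₀, by constructor <;> linarith⟩ : Set.Icc t₀ T)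
    simpa using h3
  have hpos : (0 : ℝ) < ‖(↑u⁻¹ : C(Set.Icc t₀ T, ℝ) →L[ℝ] C(Set.Icc t₀ T, ℝ))‖ :=
    (norm_pos_iff (a := (↑u⁻¹ : C(Set.Icc t₀ T, ℝ) →L[ℝ] C(Set.Icc t₀ T, ℝ)))).mpr (Units.ne_zero u⁻¹)
  have hV1 : (0 : ℝ) < ‖V‖ + 1 := by positivity
  refine ⟨‖(↑u⁻¹ : C(Set.Icc t₀ T, ℝ) →L[ℝ] C(Set.Icc t₀ T, ℝ))‖⁻¹ / (‖V‖ + 1),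
    by positivity, ?_⟩
  intro lam hlam
  have hsmall : ‖(L₀ - lam • V) - (↑u : C(Set.Icc t₀ T, ℝ) →L[ℝ] C(Set.Icc t₀ T, ℝ))‖
      < ‖(↑u⁻¹ : C(Set.Icc t₀ T, ℝ) →L[ℝ] C(Set.Icc t₀ T, ℝ))‖⁻¹ := by
    have hu : (↑u : C(Set.Icc t₀ T, ℝ) →L[ℝ] C(Set.Icc t₀ T, ℝ)) = L₀ := rfl
    have h1 : (L₀ - lam • V) - L₀ = -(lam • V) := sub_sub_cancel_left _ _
    have h2 : ‖-(lam • V)‖ = ‖lam • V‖ := norm_neg (lam • V)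
    have h4 : ‖lam • V‖ ≤ |lam| * ‖V‖ := by
      have := ContinuousLinearMap.opNorm_smul_le lam V
      rwa [Real.norm_eq_abs] at this
    rw [hu, h1, h2]
    calc ‖lam • V‖ ≤ |lam| * ‖V‖ := h4
      _ ≤ |lam| * (‖V‖ + 1) := by
          apply mul_le_mul_of_nonneg_left (by linarith) (abs_nonneg lam)
      _ < (‖(↑u⁻¹ : C(Set.Icc t₀ T, ℝ) →L[ℝ] C(Set.Icc t₀ T, ℝ))‖⁻¹ / (‖V‖ + 1)) * (‖V‖ + 1) :=
          mul_lt_mul_of_pos_right hlam hV1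
      _ = ‖(↑u⁻¹ : C(Set.Icc t₀ T, ℝ) →L[ℝ] C(Set.Icc t₀ T, ℝ))‖⁻¹ := div_mul_cancel₀ _ (ne_of_gt hV1)
  let wu : (C(Set.Icc t₀ T, ℝ) →L[ℝ] C(Set.Icc t₀ T, ℝ))ˣ :=
    Units.ofNearby (R := C(Set.Icc t₀ T, ℝ) →L[ℝ] C(Set.Icc t₀ T, ℝ)) u (L₀ - lam • V) (by exact hsmall)
  have hwu : (↑wu : C(Set.Icc t₀ T, ℝ) →L[ℝ] C(Set.Icc t₀ T, ℝ)) = L₀ - lam • V := rfl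
  -- right-hand side as a continuous function on the interval
  let fC : C(Set.Icc t₀ T, ℝ) := ⟨_, hf.restrict⟩
  have hfC : ∀ τ : Set.Icc t₀ T, fC τ = f ↑τ := fun τ => rfl
  have key : ∀ y : C(Set.Icc t₀ T, ℝ),
      (↑wu⁻¹ : C(Set.Icc t₀ T, ℝ) →L[ℝ] C(Set.Icc t₀ T, ℝ)) ((L₀ - lam • V) y) = y := by
    intro y
    rw [← hwu, ← ContinuousLinearMap.mul_apply, Units.inv_mul, ContinuousLinearMap.one_apply]
  have key2 : (L₀ - lam • V)
      ((↑wu⁻¹ : C(Set.Icc t₀ T, ℝ) →L[ℝ] C(Set.Icc t₀ T, ℝ)) fC) = fC := by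
    rw [← hwu, ← ContinuousLinearMap.mul_apply, Units.mul_inv, ContinuousLinearMap.one_apply]
  -- solving the linear equation
  have hwsol : ∀ x : C(Set.Icc t₀ T, ℝ),
      (L₀ - lam • V) x = fC ↔ x = (↑wu⁻¹ : C(Set.Icc t₀ T, ℝ) →L[ℝ] C(Set.Icc t₀ T, ℝ)) fC := by
    intro x
    constructor
    · intro h
      have h2 := congrArg (fun y => (↑wu⁻¹ : C(Set.Icc t₀ T, ℝ) →L[ℝ] C(Set.Icc t₀ T, ℝ)) y) h
      exact (key x).symm.trans h2
    · intro h
      rw [h]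
      exact key2
  -- equivalence of the pointwise equation with the operator equation
  have hpoint : ∀ (x : C(Set.Icc t₀ T, ℝ)) (t : ℝ) (htm : t ∈ Set.Icc t₀ T),
      (Set.IccExtend ht.le x t + ∑ j, a j t * Set.IccExtend ht.le x (p j) =
        lam * (∫ s in t₀..t, K t s * Set.IccExtend ht.le x s) + f t)
      ↔ ((L₀ - lam • V) x) ⟨t, htm⟩ = f t := by
    intro x t htm
    have e1 : Set.IccExtend ht.le (⇑x) t = x ⟨t, htm⟩ := Set.IccExtend_of_mem _ _ htm
    have e2 : ∀ j, Set.IccExtend ht.le (⇑x) (p j) = x (pt j) := fun j =>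
      Set.IccExtend_of_mem _ _ (pt j).2
    have e3 : (∫ s in t₀..t, K t s * Set.IccExtend ht.le (⇑x) s)
        = ∫ s in t₀..t, Kc t s * Set.IccExtend hle (⇑x) s := by
      apply intervalIntegral.integral_congr
      intro s hs
      rw [Set.uIcc_of_le htm.1] at hs
      show K t s * Set.IccExtend ht.le (⇑x) s = Kc t s * Set.IccExtend hle (⇑x) s
      rw [hKceq t s hs.1 hs.2 htm.2]
    have e4 : ((L₀ - lam • V) x) ⟨t, htm⟩
        = x ⟨t, htm⟩ + (∑ j, x (pt j) * a j t)
          - lam * ∫ s in t₀..t, Kc t s * Set.IccExtend hle (⇑x) s := by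
      simp only [ContinuousLinearMap.sub_apply, ContinuousLinearMap.smul_apply,
        ContinuousMap.sub_apply, ContinuousMap.smul_apply, smul_eq_mul]
      rw [hL₀, hVapp]
    have e5 : ∑ j, a j t * x (pt j) = ∑ j, x (pt j) * a j t :=
      Finset.sum_congr rfl fun j _ => mul_comm _ _
    rw [e1, e3, e4]
    rw [show (∑ j, a j t * Set.IccExtend ht.le (⇑x) (p j)) = ∑ j, x (pt j) * a j t from
      (Finset.sum_congr rfl fun j _ => by rw [e2 j]).trans e5]
    constructor
    · intro h; linarith [h]
    · intro h; linarith [h]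
  have hiff : ∀ x : C(Set.Icc t₀ T, ℝ),
      (∀ t ∈ Set.Icc t₀ T,
        Set.IccExtend ht.le x t + ∑ j, a j t * Set.IccExtend ht.le x (p j) =
          lam * (∫ s in t₀..t, K t s * Set.IccExtend ht.le x s) + f t)
      ↔ (L₀ - lam • V) x = fC := by
    intro x
    constructor
    · intro h
      apply ContinuousMap.ext
      intro τ
      have := (hpoint x ↑τ τ.2).mp (h ↑τ τ.2)
      rw [hfC]
      exact this
    · intro h t htm
      apply (hpoint x t htm).mpr
      have := DFunLike.congr_fun h (⟨t, htm⟩ : Set.Icc t₀ T)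
      rw [hfC] at this
      exact this
  refine ⟨(↑wu⁻¹ : C(Set.Icc t₀ T, ℝ) →L[ℝ] C(Set.Icc t₀ T, ℝ)) fC, ?_, ?_⟩
  · exact (hiff _).mpr ((hwsol _).mpr rfl)
  · intro x hx
    exact (hwsol x).mp ((hiff x).mp hx)
end

section
/- (Theorem 3, unsolvable case) Let λ₀ ∈ ℝ with det A(λ₀) = 0, and suppose there exists y ∈ ℝ^{m−1} with A(λ₀)ᵀ y = 0 and ⟨d(λ₀), y⟩ ≠ 0. Then the loaded Volterra integral equation (with λ = λ₀) has no continuous solution on [t₀,T]. -/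
open MeasureTheory Matrix

open intervalIntegral Set Filter

open scoped Interval

namespace LVIEaux

lemma exists_ext {X : Type*} [TopologicalSpace X] [NormalSpace X] {s : Set X} (hs : IsClosed s)
    {f : X → ℝ} (hf : ContinuousOn f s) :
    ∃ g : X → ℝ, Continuous g ∧ ∀ x ∈ s, g x = f x := by
  obtain ⟨g, hg⟩ := ContinuousMap.exists_restrict_eq hs ⟨s.restrict f, hf.restrict⟩
  refine ⟨g, g.continuous, fun x hx => ?_⟩
  have := congrFun (congrArg ContinuousMap.toFun hg) ⟨x, hx⟩
  exact this

noncomputable def iter (K : ℝ → ℝ → ℝ) : ℕ → ℝ → ℝ → ℝ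
  | 0 => K
  | n+1 => fun t s => ∫ z in s..t, K t z * iter K n z s

lemma iter_cont {K : ℝ → ℝ → ℝ} (hK : Continuous fun q : ℝ × ℝ => K q.1 q.2) :
    ∀ n, Continuous fun q : ℝ × ℝ => iter K n q.1 q.2 := by
  intro n
  induction n with
  | zero => exact hK
  | succ n ih =>
    have hcont : Continuous (Function.uncurry fun (q : ℝ × ℝ) (z : ℝ) =>
        K q.1 z * iter K n z q.2) := by
      apply Continuous.mul
      · exact hK.comp ((continuous_fst.comp continuous_fst).prodMk continuous_snd)
      · exact ih.comp (continuous_snd.prodMk (continuous_snd.comp continuous_fst))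
    have h1 : Continuous fun q : ℝ × ℝ => ∫ z in (0:ℝ)..q.1, K q.1 z * iter K n z q.2 :=
      continuous_parametric_intervalIntegral_of_continuous (μ := volume) hcont continuous_fst
    have h2 : Continuous fun q : ℝ × ℝ => ∫ z in (0:ℝ)..q.2, K q.1 z * iter K n z q.2 :=
      continuous_parametric_intervalIntegral_of_continuous (μ := volume) hcont continuous_snd
    have key : ∀ q : ℝ × ℝ, iter K (n+1) q.1 q.2
        = (∫ z in (0:ℝ)..q.1, K q.1 z * iter K n z q.2)
          - ∫ z in (0:ℝ)..q.2, K q.1 z * iter K n z q.2 := by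
      intro q
      have hcz : Continuous fun z => K q.1 z * iter K n z q.2 :=
        hcont.comp ((continuous_const (y := q)).prodMk continuous_id)
      rw [intervalIntegral.integral_interval_sub_left
        (hcz.intervalIntegrable _ _) (hcz.intervalIntegrable _ _)]
      rfl
    convert h1.sub h2 using 1; exact funext key

lemma abs_int_pow (s t : ℝ) (n : ℕ) :
    |∫ z in s..t, |z - s| ^ n| = |t - s| ^ (n+1) / (n+1) := by
  rcases le_total s t with h | h
  · have h1 : (∫ z in s..t, |z - s| ^ n) = ∫ z in s..t, (z - s) ^ n := by
      apply intervalIntegral.integral_congr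
      intro z hz
      rw [Set.uIcc_of_le h] at hz
      show |z - s| ^ n = (z - s) ^ n
      rw [abs_of_nonneg (sub_nonneg.2 hz.1)]
    have h0 : (0:ℝ) ≤ t - s := sub_nonneg.2 h
    rw [h1, intervalIntegral.integral_comp_sub_right (fun u => u ^ n) s, sub_self,
      integral_pow, zero_pow (Nat.succ_ne_zero n), sub_zero,
      abs_of_nonneg (div_nonneg (pow_nonneg h0 _) (by positivity)),
      abs_of_nonneg h0]
  · have h1 : (∫ z in s..t, |z - s| ^ n) = ∫ z in s..t, (s - z) ^ n := by
      apply intervalIntegral.integral_congr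
      intro z hz
      rw [Set.uIcc_of_ge h] at hz
      show |z - s| ^ n = (s - z) ^ n
      rw [abs_sub_comm, abs_of_nonneg (sub_nonneg.2 hz.2)]
    have h0 : (0:ℝ) ≤ s - t := sub_nonneg.2 h
    rw [h1, intervalIntegral.integral_comp_sub_left (fun u => u ^ n) s, sub_self,
      integral_pow, zero_pow (Nat.succ_ne_zero n), zero_sub, neg_div, abs_neg,
      abs_of_nonneg (div_nonneg (pow_nonneg h0 _) (by positivity)),
      abs_sub_comm, abs_of_nonneg h0]


lemma uIoc_subset_Icc {t₀ T s t : ℝ} (hs : s ∈ Icc t₀ T) (ht : t ∈ Icc t₀ T) :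
    Ι s t ⊆ Icc t₀ T := by
  intro z hz
  rw [Set.mem_uIoc] at hz
  rcases hz with ⟨h1, h2⟩ | ⟨h1, h2⟩
  · exact ⟨hs.1.trans h1.le, h2.trans ht.2⟩
  · exact ⟨ht.1.trans h1.le, h2.trans hs.2⟩

lemma iter_bound {t₀ T M : ℝ} {K : ℝ → ℝ → ℝ}
    (hM : ∀ t ∈ Icc t₀ T, ∀ s ∈ Icc t₀ T, |K t s| ≤ M) :
    ∀ n, ∀ t ∈ Icc t₀ T, ∀ s ∈ Icc t₀ T,
      |iter K n t s| ≤ M ^ (n+1) * |t - s| ^ n / n.factorial := by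
  intro n
  induction n with
  | zero =>
    intro t ht s hs
    simpa [iter] using hM t ht s hs
  | succ n ih =>
    intro t ht s hs
    have hM0 : 0 ≤ M := (abs_nonneg _).trans (hM t ht s hs)
    have hbd : ∀ᵐ z ∂volume.restrict (Ι s t),
        ‖K t z * iter K n z s‖ ≤ (M * (M ^ (n+1) / n.factorial)) * |z - s| ^ n := by
      refine (ae_restrict_iff' measurableSet_uIoc).2 (Filter.Eventually.of_forall fun z hz => ?_)
      have hzI : z ∈ Icc t₀ T := uIoc_subset_Icc hs ht hz
      have h1 : |K t z * iter K n z s| ≤ M * (M ^ (n+1) * |z - s| ^ n / n.factorial) := by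
        rw [abs_mul]
        exact mul_le_mul (hM t ht z hzI) (ih z hzI s hs) (abs_nonneg _)
          hM0
      calc ‖K t z * iter K n z s‖ ≤ M * (M ^ (n+1) * |z - s| ^ n / n.factorial) := h1
        _ = (M * (M ^ (n+1) / n.factorial)) * |z - s| ^ n := by ring
    have hintb : IntervalIntegrable
        (fun z => (M * (M ^ (n+1) / n.factorial)) * |z - s| ^ n) volume s t :=
      (Continuous.mul continuous_const ((continuous_abs.comp (by fun_prop)).pow n)
        ).intervalIntegrable _ _
    have key := intervalIntegral.norm_integral_le_abs_of_norm_le hbd hintb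
    have heq : |∫ z in s..t, (M * (M ^ (n+1) / n.factorial)) * |z - s| ^ n|
        = (M * (M ^ (n+1) / n.factorial)) * (|t - s| ^ (n+1) / (n+1)) := by
      rw [intervalIntegral.integral_const_mul, abs_mul,
        abs_of_nonneg (by positivity : (0:ℝ) ≤ M * (M ^ (n+1) / n.factorial)),
        abs_int_pow]
    have : |iter K (n+1) t s| ≤ (M * (M ^ (n+1) / n.factorial)) * (|t - s| ^ (n+1) / (n+1)) := by
      rw [← heq]
      exact key
    refine this.trans (le_of_eq ?_)
    rw [Nat.factorial_succ]
    push_cast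
    have hf : (n.factorial : ℝ) ≠ 0 := Nat.cast_ne_zero.2 n.factorial_pos.ne'
    field_simp
    ring


noncomputable def RR (K : ℝ → ℝ → ℝ) (lam : ℝ) (t s : ℝ) : ℝ :=
  ∑' n : ℕ, lam ^ (n+1) * iter K n t s

noncomputable def ubound (M lam c : ℝ) (n : ℕ) : ℝ :=
  (|lam| * M) * ((|lam| * M * c) ^ n / n.factorial)

lemma summable_ubound (M lam c : ℝ) : Summable (ubound M lam c) :=
  (Real.summable_pow_div_factorial _).mul_left _

section Resolvent

variable {t₀ T M lam : ℝ} {K : ℝ → ℝ → ℝ}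

lemma term_bound (hM : ∀ t ∈ Icc t₀ T, ∀ s ∈ Icc t₀ T, |K t s| ≤ M)
    (n : ℕ) {t s : ℝ} (ht : t ∈ Icc t₀ T) (hs : s ∈ Icc t₀ T) :
    |lam ^ (n+1) * iter K n t s| ≤ ubound M lam (T - t₀) n := by
  have hM0 : 0 ≤ M := (abs_nonneg _).trans (hM t ht s hs)
  have h1 : |t - s| ≤ T - t₀ := by
    rw [abs_sub_le_iff]
    constructor <;> linarith [ht.1, ht.2, hs.1, hs.2]
  calc |lam ^ (n+1) * iter K n t s|
      ≤ |lam| ^ (n+1) * (M ^ (n+1) * |t - s| ^ n / n.factorial) := by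
        rw [abs_mul, abs_pow]
        exact mul_le_mul_of_nonneg_left (iter_bound hM n t ht s hs) (by positivity)
    _ ≤ |lam| ^ (n+1) * (M ^ (n+1) * (T - t₀) ^ n / n.factorial) := by
        gcongr
    _ = ubound M lam (T - t₀) n := by
        unfold ubound
        rw [mul_pow, mul_pow, pow_succ, pow_succ]
        ring

lemma summable_term (hM : ∀ t ∈ Icc t₀ T, ∀ s ∈ Icc t₀ T, |K t s| ≤ M)
    {t s : ℝ} (ht : t ∈ Icc t₀ T) (hs : s ∈ Icc t₀ T) :
    Summable (fun n : ℕ => lam ^ (n+1) * iter K n t s) :=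
  Summable.of_norm_bounded (summable_ubound M lam (T - t₀))
    (fun n => term_bound hM n ht hs)

lemma RR_contOn (hK : Continuous fun q : ℝ × ℝ => K q.1 q.2)
    (hM : ∀ t ∈ Icc t₀ T, ∀ s ∈ Icc t₀ T, |K t s| ≤ M) :
    ContinuousOn (fun q : ℝ × ℝ => RR K lam q.1 q.2) (Icc t₀ T ×ˢ Icc t₀ T) := by
  apply continuousOn_tsum
    (f := fun (n : ℕ) (q : ℝ × ℝ) => lam ^ (n+1) * iter K n q.1 q.2)
    (u := ubound M lam (T - t₀))
  · exact fun n => (continuous_const.mul (iter_cont hK n)).continuousOn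
  · exact summable_ubound M lam (T - t₀)
  · intro n q hq
    exact term_bound hM n hq.1 hq.2

lemma hasSum_resolvent (hK : Continuous fun q : ℝ × ℝ => K q.1 q.2)
    (hM : ∀ t ∈ Icc t₀ T, ∀ s ∈ Icc t₀ T, |K t s| ≤ M)
    {t s : ℝ} (ht : t ∈ Icc t₀ T) (hs : s ∈ Icc t₀ T) :
    HasSum (fun n : ℕ => lam ^ (n+1) * iter K (n+1) t s)
      (∫ z in s..t, K t z * RR K lam z s) := by
  have key : HasSum (fun n : ℕ => ∫ z in s..t, K t z * (lam ^ (n+1) * iter K n z s))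
      (∫ z in s..t, K t z * RR K lam z s) := by
    apply intervalIntegral.hasSum_integral_of_dominated_convergence
      (bound := fun n _ => M * ubound M lam (T - t₀) n)
    · intro n
      have : Continuous fun z => K t z * (lam ^ (n+1) * iter K n z s) := by
        apply Continuous.mul
        · exact hK.comp (continuous_const.prodMk continuous_id)
        · exact continuous_const.mul
            ((iter_cont hK n).comp (continuous_id.prodMk continuous_const))
      exact this.aestronglyMeasurable
    · intro n
      refine Filter.Eventually.of_forall fun z hz => ?_
      have hzI : z ∈ Icc t₀ T := uIoc_subset_Icc hs ht hz
      have := term_bound (lam := lam) hM n hzI hs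
      calc ‖K t z * (lam ^ (n+1) * iter K n z s)‖
          = |K t z| * |lam ^ (n+1) * iter K n z s| := abs_mul _ _
        _ ≤ M * ubound M lam (T - t₀) n := by
            apply mul_le_mul (hM t ht z hzI) this (abs_nonneg _)
            exact (abs_nonneg _).trans (hM t ht z hzI)
    · exact Filter.Eventually.of_forall fun z _ =>
        ((summable_ubound M lam (T - t₀)).mul_left M)
    · exact continuous_const.intervalIntegrable _ _
    · refine Filter.Eventually.of_forall fun z hz => ?_
      have hzI : z ∈ Icc t₀ T := uIoc_subset_Icc hs ht hz
      exact ((summable_term hM hzI hs).hasSum).mul_left (K t z)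
  have heq : ∀ n : ℕ, (∫ z in s..t, K t z * (lam ^ (n+1) * iter K n z s))
      = lam ^ (n+1) * iter K (n+1) t s := by
    intro n
    have h1 : (fun z => K t z * (lam ^ (n+1) * iter K n z s))
        = fun z => lam ^ (n+1) * (K t z * iter K n z s) := by
      funext z; ring
    rw [h1, intervalIntegral.integral_const_mul]
    rfl
  simpa only [heq] using key

lemma resolvent_id (hK : Continuous fun q : ℝ × ℝ => K q.1 q.2)
    (hM : ∀ t ∈ Icc t₀ T, ∀ s ∈ Icc t₀ T, |K t s| ≤ M)
    {t s : ℝ} (ht : t ∈ Icc t₀ T) (hs : s ∈ Icc t₀ T) :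
    lam * ∫ z in s..t, K t z * RR K lam z s = RR K lam t s - lam * K t s := by
  have h1 := (hasSum_resolvent (lam := lam) hK hM ht hs).tsum_eq
  have h2 : RR K lam t s = lam ^ 1 * iter K 0 t s
      + ∑' n : ℕ, lam ^ (n+2) * iter K (n+1) t s := by
    rw [RR, Summable.tsum_eq_zero_add (summable_term hM ht hs)]
  have h3 : lam * ∫ z in s..t, K t z * RR K lam z s
      = ∑' n : ℕ, lam ^ (n+2) * iter K (n+1) t s := by
    rw [← h1, ← tsum_mul_left]
    apply tsum_congr
    intro n
    rw [pow_succ]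
    ring
  rw [h3, h2]
  have : lam ^ 1 * iter K 0 t s = lam * K t s := by
    rw [pow_one]; rfl
  rw [this]
  ring

end Resolvent


lemma triangle_swap {a b : ℝ} (hab : a ≤ b) {G : ℝ → ℝ → ℝ}
    (hG : Continuous fun q : ℝ × ℝ => G q.1 q.2) :
    (∫ s in a..b, (∫ z in a..s, G s z)) = ∫ z in a..b, (∫ s in z..b, G s z) := by
  set Ψ : ℝ → ℝ → ℝ := fun s z => Set.indicator {z | z ≤ s} (G s) z with hΨ
  -- the uncurried Ψ is integrable on the product
  have hΨunc : Function.uncurry Ψ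
      = Set.indicator {q : ℝ × ℝ | q.2 ≤ q.1} (fun q => G q.1 q.2) := by
    funext q
    simp only [Function.uncurry, hΨ, Set.indicator_apply, Set.mem_setOf_eq]
  have hGint : IntegrableOn (fun q : ℝ × ℝ => G q.1 q.2) (Ioc a b ×ˢ Ioc a b)
      (volume.prod volume) := by
    apply IntegrableOn.mono_set
      (hG.continuousOn.integrableOn_compact (isCompact_Icc.prod isCompact_Icc))
    exact Set.prod_mono Ioc_subset_Icc_self Ioc_subset_Icc_self
  have hmeas : MeasurableSet {q : ℝ × ℝ | q.2 ≤ q.1} :=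
    (isClosed_le continuous_snd continuous_fst).measurableSet
  have hΨint : Integrable (Function.uncurry Ψ)
      ((volume.restrict (Ioc a b)).prod (volume.restrict (Ioc a b))) := by
    rw [hΨunc, Measure.prod_restrict]
    exact (hGint.indicator hmeas)
  have hswap := MeasureTheory.integral_integral_swap hΨint
  -- identify LHS
  have hLHS : (∫ s in a..b, (∫ z in a..s, G s z))
      = ∫ s in Ioc a b, (∫ z in Ioc a b, Ψ s z) := by
    rw [← intervalIntegral.integral_of_le hab]
    apply intervalIntegral.integral_congr
    intro s hs
    rw [Set.uIcc_of_le hab] at hs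
    show (∫ z in a..s, G s z) = ∫ z in Ioc a b, Ψ s z
    rw [← intervalIntegral.integral_of_le hab]
    exact (intervalIntegral.integral_indicator hs).symm
  -- identify RHS
  have hRHS : (∫ z in a..b, (∫ s in z..b, G s z))
      = ∫ z in Ioc a b, (∫ s in Ioc a b, Ψ s z) := by
    rw [← intervalIntegral.integral_of_le hab]
    apply intervalIntegral.integral_congr
    intro z hz
    rw [Set.uIcc_of_le hab] at hz
    show (∫ s in z..b, G s z) = ∫ s in Ioc a b, Ψ s z
    rw [← intervalIntegral.integral_of_le hab]
    have hzero : ∀ᵐ s : ℝ ∂volume, s ∈ Ι a b →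
        Ψ s z = G s z - Set.indicator {s | s ≤ z} (fun s => G s z) s := by
      have hne : ∀ᵐ s : ℝ ∂volume, s ≠ z := by
        rw [ae_iff]
        have he : {s : ℝ | ¬s ≠ z} = {z} := by ext s; simp
        rw [he]
        exact measure_singleton z
      refine hne.mono fun s hs _ => ?_
      simp only [hΨ, Set.indicator_apply, Set.mem_setOf_eq]
      rcases lt_trichotomy s z with h | h | h
      · rw [if_neg (by linarith), if_pos h.le]
        ring
      · exact absurd h hs
      · rw [if_pos h.le, if_neg (by linarith)]
        ring
    rw [intervalIntegral.integral_congr_ae hzero]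
    have hc1 : Continuous fun s => G s z :=
      hG.comp (continuous_id.prodMk continuous_const)
    have hi1 : IntervalIntegrable (fun s => G s z) volume a b := hc1.intervalIntegrable _ _
    have hi2 : IntervalIntegrable (fun s => Set.indicator {s | s ≤ z} (fun s => G s z) s)
        volume a b := by
      rw [intervalIntegrable_iff]
      exact ((hc1.intervalIntegrable a b).def').indicator measurableSet_Iic
    rw [intervalIntegral.integral_sub hi1 hi2,
      intervalIntegral.integral_indicator hz,
      intervalIntegral.integral_interval_sub_left hi1 (hc1.intervalIntegrable _ _)]
  rw [hLHS, hRHS]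
  exact hswap


lemma volterra_unique {t₀ T lam M : ℝ} {Kf : ℝ → ℝ → ℝ} {u : ℝ → ℝ}
    (hKM : ∀ t ∈ Icc t₀ T, ∀ s ∈ Icc t₀ T, |Kf t s| ≤ M)
    (hu : Continuous u)
    (heq : ∀ t ∈ Icc t₀ T, u t = lam * ∫ s in t₀..t, Kf t s * u s) :
    ∀ t ∈ Icc t₀ T, u t = 0 := by
  obtain ⟨C, hC⟩ := (isCompact_Icc (a := t₀) (b := T)).exists_bound_of_continuousOn
    hu.continuousOn
  intro t ht
  have ht₀ : t₀ ∈ Icc t₀ T := ⟨le_refl _, ht.1.trans ht.2⟩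
  have hM0 : 0 ≤ M := (abs_nonneg _).trans (hKM t ht t ht)
  have hC0 : 0 ≤ C := (norm_nonneg _).trans (hC t ht)
  set L := |lam| * M with hLdef
  have hL0 : 0 ≤ L := mul_nonneg (abs_nonneg _) hM0
  have claim : ∀ n : ℕ, ∀ r ∈ Icc t₀ T,
      |u r| ≤ C * (L ^ n * (r - t₀) ^ n / n.factorial) := by
    intro n
    induction n with
    | zero =>
      intro r hr
      simpa using hC r hr
    | succ n ih =>
      intro r hr
      have hr0 : t₀ ≤ r := hr.1
      have hbd : ∀ᵐ s ∂volume.restrict (Ι t₀ r),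
          ‖Kf r s * u s‖ ≤ (M * (C * (L ^ n / n.factorial))) * |s - t₀| ^ n := by
        refine (ae_restrict_iff' measurableSet_uIoc).2
          (Filter.Eventually.of_forall fun s hs => ?_)
        have hsI : s ∈ Icc t₀ T := uIoc_subset_Icc ht₀ hr hs
        have habs : |s - t₀| ^ n = (s - t₀) ^ n := by
          rw [abs_of_nonneg (sub_nonneg.2 hsI.1)]
        calc ‖Kf r s * u s‖ = |Kf r s| * |u s| := abs_mul _ _
          _ ≤ M * (C * (L ^ n * (s - t₀) ^ n / n.factorial)) :=
              mul_le_mul (hKM r hr s hsI) (ih s hsI) (abs_nonneg _) hM0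
          _ = (M * (C * (L ^ n / n.factorial))) * |s - t₀| ^ n := by
              rw [habs]; ring
      have hintb : IntervalIntegrable
          (fun s => (M * (C * (L ^ n / n.factorial))) * |s - t₀| ^ n) volume t₀ r :=
        (continuous_const.mul ((continuous_abs.comp (by fun_prop)).pow n)
          ).intervalIntegrable _ _
      have key := intervalIntegral.norm_integral_le_abs_of_norm_le hbd hintb
      have heq2 : |∫ s in t₀..r, (M * (C * (L ^ n / n.factorial))) * |s - t₀| ^ n|
          = (M * (C * (L ^ n / n.factorial))) * (|r - t₀| ^ (n+1) / (n+1)) := by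
        rw [intervalIntegral.integral_const_mul, abs_mul,
          abs_of_nonneg (by positivity : (0:ℝ) ≤ M * (C * (L ^ n / n.factorial))),
          abs_int_pow]
      have h3 : |u r| ≤ |lam| * ((M * (C * (L ^ n / n.factorial)))
          * (|r - t₀| ^ (n+1) / (n+1))) := by
        rw [heq r hr, abs_mul]
        exact mul_le_mul_of_nonneg_left (key.trans_eq heq2) (abs_nonneg _)
      refine h3.trans (le_of_eq ?_)
      rw [abs_of_nonneg (sub_nonneg.2 hr0), Nat.factorial_succ, hLdef]
      push_cast
      have hf : (n.factorial : ℝ) ≠ 0 := Nat.cast_ne_zero.2 n.factorial_pos.ne'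
      field_simp
      ring
  set x := L * (T - t₀) with hxdef
  have hbd : ∀ n : ℕ, |u t| ≤ C * (x ^ n / n.factorial) := by
    intro n
    refine (claim n t ht).trans ?_
    have h1 : L ^ n * (t - t₀) ^ n = (L * (t - t₀)) ^ n := (mul_pow _ _ _).symm
    have h2 : (L * (t - t₀)) ^ n ≤ x ^ n := by
      apply pow_le_pow_left₀ (mul_nonneg hL0 (sub_nonneg.2 ht.1))
      rw [hxdef]
      exact mul_le_mul_of_nonneg_left (by linarith [ht.2]) hL0
    rw [h1]
    gcongr
  have htend : Filter.Tendsto (fun n : ℕ => C * (x ^ n / n.factorial))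
      Filter.atTop (nhds 0) := by
    have := (Real.summable_pow_div_factorial x).tendsto_atTop_zero
    simpa using this.const_mul C
  have : |u t| ≤ 0 := ge_of_tendsto' htend hbd
  exact abs_nonpos_iff.1 (by linarith [abs_nonneg (u t)])

end LVIEaux

open LVIEaux

/-- Theorem 3 (unsolvable case): if det A(λ₀) = 0 and d(λ₀) is not orthogonal to
some solution y of the adjoint homogeneous system A(λ₀)ᵀ y = 0, then the LVIE has
no continuous solution on [t₀,T]. -/
theorem lvie_no_solution_of_unsolvable_slae
    (t₀ T : ℝ) (ht : t₀ < T) (m : ℕ) (hm : 2 ≤ m)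
    (p : Fin (m - 1) → ℝ) (hpmono : StrictMono p)
    (hp : ∀ j, t₀ < p j ∧ p j < T)
    (f : ℝ → ℝ) (hf : ContinuousOn f (Set.Icc t₀ T))
    (a : Fin (m - 1) → ℝ → ℝ) (ha : ∀ j, ContinuousOn (a j) (Set.Icc t₀ T))
    (K : ℝ → ℝ → ℝ)
    (hK : ContinuousOn (fun q : ℝ × ℝ => K q.1 q.2)
      {q : ℝ × ℝ | t₀ ≤ q.2 ∧ q.2 ≤ q.1 ∧ q.1 ≤ T})
    (lam₀ : ℝ)
    (Kn : ℕ → ℝ → ℝ → ℝ)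
    (hKn1 : ∀ t s, Kn 1 t s = K t s)
    (hKnrec : ∀ n, 2 ≤ n → ∀ t s, Kn n t s = ∫ z in s..t, K t z * Kn (n - 1) z s)
    (R : ℝ → ℝ → ℝ → ℝ)
    (hR : ∀ t s lam', R t s lam' = ∑' n : ℕ, lam' ^ (n + 1) * Kn (n + 1) t s)
    (F : ℝ → ℝ → ℝ)
    (hF : ∀ t lam', F t lam' = f t + ∫ s in t₀..t, R t s lam' * f s)
    (b : Fin (m - 1) → ℝ → ℝ → ℝ)
    (hb : ∀ j t lam', b j t lam' = a j t + ∫ s in t₀..t, R t s lam' * a j s)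
    (A : Matrix (Fin (m - 1)) (Fin (m - 1)) ℝ)
    (hA : ∀ i j, A i j = (if i = j then 1 else 0) + b j (p i) lam₀)
    (d : Fin (m - 1) → ℝ)
    (hd : ∀ i, d i = F (p i) lam₀)
    (hdet : A.det = 0)
    (y : Fin (m - 1) → ℝ) (hy : Aᵀ *ᵥ y = 0) (hdy : d ⬝ᵥ y ≠ 0) :
    ¬ ∃ x : ℝ → ℝ, ContinuousOn x (Set.Icc t₀ T) ∧
      ∀ t ∈ Set.Icc t₀ T,
        x t + ∑ j, a j t * x (p j) =
          lam₀ * (∫ s in t₀..t, K t s * x s) + f t := by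
  rintro ⟨x, hxc, hxeq⟩
  have htT : t₀ ≤ T := ht.le
  have hpI : ∀ j, p j ∈ Set.Icc t₀ T := fun j => ⟨(hp j).1.le, (hp j).2.le⟩
  have ht₀I : t₀ ∈ Set.Icc t₀ T := ⟨le_refl _, htT⟩
  -- extend all data continuously
  have hΔ : IsClosed {q : ℝ × ℝ | t₀ ≤ q.2 ∧ q.2 ≤ q.1 ∧ q.1 ≤ T} := by
    simp only [Set.setOf_and]
    exact (isClosed_le continuous_const continuous_snd).inter
      ((isClosed_le continuous_snd continuous_fst).inter
        (isClosed_le continuous_fst continuous_const))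
  obtain ⟨Ke, hKec, hKeq⟩ := exists_ext hΔ hK
  obtain ⟨x', hx'c, hx'eq⟩ := exists_ext isClosed_Icc hxc
  obtain ⟨f', hf'c, hf'eq⟩ := exists_ext isClosed_Icc hf
  choose a' ha'c ha'eq using fun j => exists_ext isClosed_Icc (ha j)
  set K2 : ℝ → ℝ → ℝ := fun t s => Ke (t, s) with hK2def
  have hK2c : Continuous fun q : ℝ × ℝ => K2 q.1 q.2 :=
    hKec.comp (continuous_fst.prodMk continuous_snd)
  have hK2eq : ∀ t s, t₀ ≤ s → s ≤ t → t ≤ T → K2 t s = K t s := fun t s h1 h2 h3 =>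
    hKeq (t, s) ⟨h1, h2, h3⟩
  obtain ⟨M, hMb⟩ := (isCompact_Icc.prod isCompact_Icc).exists_bound_of_continuousOn
    (hK2c.continuousOn (s := Set.Icc t₀ T ×ˢ Set.Icc t₀ T))
  have hM : ∀ t ∈ Set.Icc t₀ T, ∀ s ∈ Set.Icc t₀ T, |K2 t s| ≤ M :=
    fun t htm s hsm => hMb (t, s) ⟨htm, hsm⟩
  -- loaded values and inhomogeneity
  set c : Fin (m - 1) → ℝ := fun j => x (p j) with hcdef
  set g : ℝ → ℝ := fun s => f' s - ∑ j, a' j s * c j with hgdef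
  have hgc : Continuous g :=
    hf'c.sub (continuous_finset_sum _ fun j _ => (ha'c j).mul continuous_const)
  -- Volterra equation for x'
  have hveq : ∀ t ∈ Set.Icc t₀ T,
      x' t = lam₀ * (∫ s in t₀..t, K2 t s * x' s) + g t := by
    intro t htm
    have h1 := hxeq t htm
    have hint : (∫ s in t₀..t, K t s * x s) = ∫ s in t₀..t, K2 t s * x' s := by
      apply intervalIntegral.integral_congr
      intro s hs
      rw [Set.uIcc_of_le htm.1] at hs
      have hsI : s ∈ Set.Icc t₀ T := ⟨hs.1, hs.2.trans htm.2⟩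
      show K t s * x s = K2 t s * x' s
      rw [hK2eq t s hs.1 hs.2 htm.2, hx'eq s hsI]
    have hgt : g t = f t - ∑ j, a j t * x (p j) := by
      rw [hgdef]
      simp only
      rw [hf'eq t htm]
      congr 1
      refine Finset.sum_congr rfl fun j _ => ?_
      rw [ha'eq j t htm, hcdef]
    rw [hx'eq t htm, ← hint, hgt]
    linarith [h1]
  -- the resolvent and its continuous extension
  have hRRcont : ContinuousOn (fun q : ℝ × ℝ => RR K2 lam₀ q.1 q.2)
      (Set.Icc t₀ T ×ˢ Set.Icc t₀ T) := RR_contOn hK2c hM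
  obtain ⟨Re, hRec, hReq⟩ := exists_ext (isClosed_Icc.prod isClosed_Icc) hRRcont
  set R2 : ℝ → ℝ → ℝ := fun t s => Re (t, s) with hR2def
  have hR2c : Continuous fun q : ℝ × ℝ => R2 q.1 q.2 :=
    hRec.comp (continuous_fst.prodMk continuous_snd)
  have hR2eq : ∀ t ∈ Set.Icc t₀ T, ∀ s ∈ Set.Icc t₀ T, R2 t s = RR K2 lam₀ t s :=
    fun t htm s hsm => hReq (t, s) ⟨htm, hsm⟩
  have hR2s : ∀ t : ℝ, Continuous fun s => R2 t s :=
    fun t => hR2c.comp (continuous_const.prodMk continuous_id)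
  have hK2s : ∀ t : ℝ, Continuous fun s => K2 t s :=
    fun t => hK2c.comp (continuous_const.prodMk continuous_id)
  -- the candidate solution w
  set w : ℝ → ℝ := fun t => g t + ∫ s in t₀..t, R2 t s * g s with hwdef
  have hcontRg : Continuous (Function.uncurry fun (t : ℝ) (z : ℝ) => R2 t z * g z) :=
    hR2c.mul (hgc.comp continuous_snd)
  have hΦc : Continuous fun t => ∫ s in t₀..t, R2 t s * g s :=
    intervalIntegral.continuous_parametric_intervalIntegral_of_continuous
      (μ := volume) hcontRg continuous_id
  have hwc : Continuous w := hgc.add hΦc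
  -- Claim A : w satisfies the same Volterra equation
  have hweq : ∀ t ∈ Set.Icc t₀ T,
      w t = lam₀ * (∫ s in t₀..t, K2 t s * w s) + g t := by
    intro t htm
    have hGc : Continuous fun q : ℝ × ℝ => K2 t q.1 * (R2 q.1 q.2 * g q.2) :=
      ((hK2s t).comp continuous_fst).mul (hR2c.mul (hgc.comp continuous_snd))
    have hsplit : (∫ s in t₀..t, K2 t s * w s)
        = (∫ s in t₀..t, K2 t s * g s)
          + ∫ s in t₀..t, K2 t s * (∫ z in t₀..s, R2 s z * g z) := by
      rw [← intervalIntegral.integral_add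
        ((show Continuous fun s => K2 t s * g s from (hK2s t).mul hgc).intervalIntegrable _ _)
        ((show Continuous fun s => K2 t s * ∫ z in t₀..s, R2 s z * g z from (hK2s t).mul hΦc).intervalIntegrable _ _)]
      apply intervalIntegral.integral_congr
      intro s _
      show K2 t s * w s = _
      rw [hwdef]
      simp only
      ring
    have hI2 : lam₀ * (∫ s in t₀..t, K2 t s * (∫ z in t₀..s, R2 s z * g z))
        = (∫ s in t₀..t, R2 t s * g s) - lam₀ * (∫ s in t₀..t, K2 t s * g s) := by
      have e1 : (∫ s in t₀..t, K2 t s * (∫ z in t₀..s, R2 s z * g z))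
          = ∫ s in t₀..t, ∫ z in t₀..s, K2 t s * (R2 s z * g z) := by
        apply intervalIntegral.integral_congr
        intro s _
        exact (intervalIntegral.integral_const_mul _ _).symm
      have e2 := triangle_swap htm.1 (G := fun s z => K2 t s * (R2 s z * g z)) hGc
      have e3 : (∫ z in t₀..t, ∫ s in z..t, K2 t s * (R2 s z * g z))
          = ∫ z in t₀..t, (∫ s in z..t, K2 t s * R2 s z) * g z := by
        apply intervalIntegral.integral_congr
        intro z _
        show (∫ s in z..t, K2 t s * (R2 s z * g z)) = (∫ s in z..t, K2 t s * R2 s z) * g z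
        rw [← intervalIntegral.integral_mul_const]
        apply intervalIntegral.integral_congr
        intro s _
        show K2 t s * (R2 s z * g z) = K2 t s * R2 s z * g z
        ring
      have e4 : (∫ z in t₀..t, lam₀ * ((∫ s in z..t, K2 t s * R2 s z) * g z))
          = ∫ z in t₀..t, (R2 t z * g z - lam₀ * (K2 t z * g z)) := by
        apply intervalIntegral.integral_congr
        intro z hz
        rw [Set.uIcc_of_le htm.1] at hz
        have hzI : z ∈ Set.Icc t₀ T := ⟨hz.1, hz.2.trans htm.2⟩
        show lam₀ * ((∫ s in z..t, K2 t s * R2 s z) * g z)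
            = R2 t z * g z - lam₀ * (K2 t z * g z)
        have h4 : (∫ s in z..t, K2 t s * R2 s z)
            = ∫ s in z..t, K2 t s * RR K2 lam₀ s z := by
          apply intervalIntegral.integral_congr
          intro s hs
          rw [Set.uIcc_of_le hz.2] at hs
          have hsI : s ∈ Set.Icc t₀ T := ⟨hzI.1.trans hs.1, hs.2.trans htm.2⟩
          show K2 t s * R2 s z = _
          rw [hR2eq s hsI z hzI]
        have h6 := resolvent_id (lam := lam₀) hK2c hM htm hzI
        rw [hR2eq t htm z hzI]
        calc lam₀ * ((∫ s in z..t, K2 t s * R2 s z) * g z)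
            = (lam₀ * ∫ s in z..t, K2 t s * RR K2 lam₀ s z) * g z := by rw [h4]; ring
          _ = (RR K2 lam₀ t z - lam₀ * K2 t z) * g z := by rw [h6]
          _ = RR K2 lam₀ t z * g z - lam₀ * (K2 t z * g z) := by ring
      rw [e1, e2, e3, ← intervalIntegral.integral_const_mul, e4,
        intervalIntegral.integral_sub ((show Continuous fun z => R2 t z * g z from (hR2s t).mul hgc).intervalIntegrable _ _)
          ((show Continuous fun z => lam₀ * (K2 t z * g z) from continuous_const.mul ((hK2s t).mul hgc)).intervalIntegrable _ _),
        intervalIntegral.integral_const_mul]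
    rw [hwdef]
    simp only
    rw [hsplit, mul_add, hI2]
    ring
  -- uniqueness : x' = w on [t₀, T]
  have hueq : ∀ t ∈ Set.Icc t₀ T,
      (x' t - w t) = lam₀ * ∫ s in t₀..t, K2 t s * (x' s - w s) := by
    intro t htm
    have h1 := hveq t htm
    have h2 := hweq t htm
    have h3 : (∫ s in t₀..t, K2 t s * (x' s - w s))
        = (∫ s in t₀..t, K2 t s * x' s) - ∫ s in t₀..t, K2 t s * w s := by
      rw [← intervalIntegral.integral_sub ((show Continuous fun s => K2 t s * x' s from (hK2s t).mul hx'c).intervalIntegrable _ _)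
        ((show Continuous fun s => K2 t s * w s from (hK2s t).mul hwc).intervalIntegrable _ _)]
      apply intervalIntegral.integral_congr
      intro s _
      show K2 t s * (x' s - w s) = _
      ring
    rw [h3]
    linarith [h1, h2]
  have hxw : ∀ t ∈ Set.Icc t₀ T, x' t = w t := by
    intro t htm
    have := volterra_unique hM (hx'c.sub hwc) hueq t htm
    linarith [this, Pi.sub_apply x' w t]
  -- agreement of iterated kernels
  have hagree : ∀ n : ℕ, ∀ t s : ℝ, t₀ ≤ s → s ≤ t → t ≤ T →
      iter K2 n t s = Kn (n+1) t s := by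
    intro n
    induction n with
    | zero =>
      intro t s h1 h2 h3
      show K2 t s = Kn 1 t s
      rw [hK2eq t s h1 h2 h3, hKn1]
    | succ n ih =>
      intro t s h1 h2 h3
      show (∫ z in s..t, K2 t z * iter K2 n z s) = Kn (n+2) t s
      rw [hKnrec (n+2) (by omega) t s]
      have hidx : n + 2 - 1 = n + 1 := rfl
      rw [hidx]
      apply intervalIntegral.integral_congr
      intro z hz
      rw [Set.uIcc_of_le h2] at hz
      show K2 t z * iter K2 n z s = K t z * Kn (n+1) z s
      rw [hK2eq t z (h1.trans hz.1) hz.2 h3, ih z s h1 hz.1 (hz.2.trans h3)]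
  have hRmatch : ∀ t s : ℝ, t₀ ≤ s → s ≤ t → t ≤ T → R2 t s = R t s lam₀ := by
    intro t s h1 h2 h3
    rw [hR2eq t ⟨h1.trans h2, h3⟩ s ⟨h1, h2.trans h3⟩, hR t s lam₀, RR]
    exact tsum_congr fun n => by rw [hagree n t s h1 h2 h3]
  -- the SLAE
  have hslae : ∀ i, c i + ∑ j, b j (p i) lam₀ * c j = d i := by
    intro i
    have hpi := hpI i
    have hwpi : c i = w (p i) := by
      rw [hcdef]
      show x (p i) = w (p i)
      rw [← hx'eq (p i) hpi]
      exact hxw (p i) hpi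
    have hint : (∫ s in t₀..(p i), R2 (p i) s * g s)
        = (∫ s in t₀..(p i), R2 (p i) s * f' s)
          - ∑ j, (∫ s in t₀..(p i), R2 (p i) s * a' j s) * c j := by
      have e1 : (∫ s in t₀..(p i), R2 (p i) s * g s)
          = (∫ s in t₀..(p i), R2 (p i) s * f' s)
            - ∫ s in t₀..(p i), ∑ j, (R2 (p i) s * a' j s) * c j := by
        rw [← intervalIntegral.integral_sub
          ((show Continuous fun s => R2 (p i) s * f' s from (hR2s (p i)).mul hf'c).intervalIntegrable _ _)
          ((show Continuous fun s => ∑ j, (R2 (p i) s * a' j s) * c j from continuous_finset_sum _ fun j _ =>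
            (((hR2s (p i)).mul (ha'c j)).mul continuous_const)).intervalIntegrable _ _)]
        apply intervalIntegral.integral_congr
        intro s _
        show R2 (p i) s * g s
            = R2 (p i) s * f' s - ∑ j, (R2 (p i) s * a' j s) * c j
        rw [hgdef]
        simp only
        rw [mul_sub, Finset.mul_sum]
        congr 1
        exact Finset.sum_congr rfl fun j _ => by ring
      rw [e1, intervalIntegral.integral_finset_sum
        (fun j _ => (show Continuous fun s => (R2 (p i) s * a' j s) * c j from ((hR2s (p i)).mul (ha'c j)).mul continuous_const).intervalIntegrable _ _)]
      congr 1
      exact Finset.sum_congr rfl fun j _ => intervalIntegral.integral_mul_const _ _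
    have hFi : (∫ s in t₀..(p i), R2 (p i) s * f' s) = F (p i) lam₀ - f (p i) := by
      have e : (∫ s in t₀..(p i), R2 (p i) s * f' s)
          = ∫ s in t₀..(p i), R (p i) s lam₀ * f s := by
        apply intervalIntegral.integral_congr
        intro s hs
        rw [Set.uIcc_of_le hpi.1] at hs
        have hsI : s ∈ Set.Icc t₀ T := ⟨hs.1, hs.2.trans hpi.2⟩
        show R2 (p i) s * f' s = R (p i) s lam₀ * f s
        rw [hRmatch (p i) s hs.1 hs.2 hpi.2, hf'eq s hsI]
      rw [e, hF (p i) lam₀]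
      ring
    have hbj : ∀ j, (∫ s in t₀..(p i), R2 (p i) s * a' j s)
        = b j (p i) lam₀ - a j (p i) := by
      intro j
      have e : (∫ s in t₀..(p i), R2 (p i) s * a' j s)
          = ∫ s in t₀..(p i), R (p i) s lam₀ * a j s := by
        apply intervalIntegral.integral_congr
        intro s hs
        rw [Set.uIcc_of_le hpi.1] at hs
        have hsI : s ∈ Set.Icc t₀ T := ⟨hs.1, hs.2.trans hpi.2⟩
        show R2 (p i) s * a' j s = R (p i) s lam₀ * a j s
        rw [hRmatch (p i) s hs.1 hs.2 hpi.2, ha'eq j s hsI]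
      rw [e, hb j (p i) lam₀]
      ring
    have hgpi : g (p i) = f (p i) - ∑ j, a j (p i) * c j := by
      rw [hgdef]
      simp only
      rw [hf'eq (p i) hpi]
      congr 1
      exact Finset.sum_congr rfl fun j _ => by rw [ha'eq j (p i) hpi]
    have hw2 : c i = (f (p i) - ∑ j, a j (p i) * c j)
        + ((F (p i) lam₀ - f (p i))
          - ∑ j, (b j (p i) lam₀ - a j (p i)) * c j) := by
      rw [hwpi, hwdef]
      simp only
      rw [hint, hFi, hgpi]
      have : ∑ j, (∫ s in t₀..(p i), R2 (p i) s * a' j s) * c j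
          = ∑ j, (b j (p i) lam₀ - a j (p i)) * c j :=
        Finset.sum_congr rfl fun j _ => by rw [hbj j]
      rw [this]
    have hsum : ∑ j, (b j (p i) lam₀ - a j (p i)) * c j
        = (∑ j, b j (p i) lam₀ * c j) - ∑ j, a j (p i) * c j := by
      rw [← Finset.sum_sub_distrib]
      exact Finset.sum_congr rfl fun j _ => by ring
    rw [hd i]
    rw [hsum] at hw2
    linarith [hw2]
  -- matrix form and contradiction
  have hAc : A *ᵥ c = d := by
    funext i
    have h := hslae i
    show ∑ j, A i j * c j = d i
    have e : ∀ j, A i j * c j = (if i = j then c j else 0) + b j (p i) lam₀ * c j := by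
      intro j
      rw [hA i j]
      by_cases hij : i = j <;> simp [hij] <;> ring
    rw [Finset.sum_congr rfl fun j _ => e j, Finset.sum_add_distrib,
      Finset.sum_ite_eq Finset.univ i c]
    simpa using h
  have h0 : d ⬝ᵥ y = 0 := by
    rw [← hAc]
    calc (A *ᵥ c) ⬝ᵥ y = y ⬝ᵥ (A *ᵥ c) := dotProduct_comm _ _
      _ = (y ᵥ* A) ⬝ᵥ c := Matrix.dotProduct_mulVec _ _ _
      _ = (Aᵀ *ᵥ y) ⬝ᵥ c := by rw [Matrix.mulVec_transpose]
      _ = 0 := by rw [hy, zero_dotProduct]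
  exact hdy h0
end
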